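/- arXiv:1501.02291 — 7 statements merged into one kernel-verified Lean document; each statement's English description precedes it below -/
import Mathlib

section
/- (Proposition 3.1) Define f(u) = (h² + tξ'(u))/c − u for u ∈ [−U, U]. Then the equation f(u) = 0 has a unique solution u* in [−U, U]. Moreover, u* = 0 when h = 0, and u* ∈ (0, U) when h ≠ 0. -/
open Set Real

/-- Proposition 3.1: the equation `f(u) = (h² + tξ'(u))/c - u = 0` has a unique
solution `u*` in `[-U, U]`; moreover `u* = 0` if `h = 0` and `u* ∈ (0, U)` if `h ≠ 0`. -/
theorem unique_root_of_chaos_equation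
    (ξ : ℝ → ℝ) (h t c U : ℝ)
    (hξ_even : ∀ s, ξ (-s) = ξ s)
    (hξ_smooth : ContDiff ℝ 3 ξ)
    (hξ'' : ∀ s ∈ Set.Ioc (0:ℝ) 1, 0 < deriv (deriv ξ) s)
    (hξ''' : ∀ s ∈ Set.Icc (0:ℝ) 1, 0 ≤ deriv (deriv (deriv ξ)) s)
    (ht : t ∈ Set.Ioo (0:ℝ) 1)
    (hc : 0 < c)
    (hU : U ∈ Set.Icc (0:ℝ) 1)
    (hstat : (h ^ 2 + deriv ξ U) / c = U) :
    ∃ ustar ∈ Set.Icc (-U) U,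
      (h ^ 2 + t * deriv ξ ustar) / c - ustar = 0 ∧
      (∀ u ∈ Set.Icc (-U) U, (h ^ 2 + t * deriv ξ u) / c - u = 0 → u = ustar) ∧
      (h = 0 → ustar = 0) ∧
      (h ≠ 0 → ustar ∈ Set.Ioo 0 U) := by
  set D := deriv ξ with hD
  -- smoothness facts
  have hD2 : ContDiff ℝ 2 D := by
    have := (contDiff_succ_iff_deriv (n := 2)).mp (by exact_mod_cast hξ_smooth)
    exact this.2.2
  have hD2' : ContDiff ℝ 1 (deriv D) := by
    have := (contDiff_succ_iff_deriv (n := 1)).mp (by exact_mod_cast hD2)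
    exact this.2.2
  have hDdiff : Differentiable ℝ D := hD2.differentiable (by norm_num)
  have hDcont : Continuous D := hDdiff.continuous
  -- oddness of D
  have hDodd : ∀ s, D (-s) = -D s := by
    intro s
    have : (fun x => ξ (-x)) = ξ := funext hξ_even
    have h1 : deriv (fun x => ξ (-x)) s = -deriv ξ (-s) := deriv_comp_neg ξ s
    rw [this] at h1
    simp [hD, h1]
  have hD0 : D 0 = 0 := by
    have := hDodd 0
    simp at this
    linarith
  -- D strictly increasing on [0,1]
  have hDmono : StrictMonoOn D (Icc (0:ℝ) 1) := by
    apply strictMonoOn_of_deriv_pos (convex_Icc 0 1) hDcont.continuousOn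
    intro x hx
    rw [interior_Icc] at hx
    exact hξ'' x ⟨hx.1, hx.2.le⟩
  -- D convex on [0,1]
  have hDconv : ConvexOn ℝ (Icc (0:ℝ) 1) D := by
    apply convexOn_of_deriv2_nonneg (convex_Icc 0 1) hDcont.continuousOn
      hDdiff.differentiableOn
      ((hD2'.differentiable (by norm_num)).differentiableOn)
    intro x hx
    rw [interior_Icc] at hx
    have : deriv^[2] D x = deriv (deriv (deriv ξ)) x := by
      simp [hD, Function.iterate_succ, Function.iterate_one]
    rw [this]
    exact hξ''' x ⟨hx.1.le, hx.2.le⟩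
  -- key convexity inequality : D v ≤ (v/U) * D U for v ∈ [0,U], when 0 < U
  have hkey : 0 < U → ∀ v, 0 ≤ v → v ≤ U → D v ≤ (v / U) * D U := by
    intro hU0 v hv0 hvU
    have hU1 : U ≤ 1 := hU.2
    have hb0 : 0 ≤ v / U := div_nonneg hv0 hU0.le
    have hb1 : v / U ≤ 1 := (div_le_one hU0).mpr hvU
    have := hDconv.2 (Set.mem_Icc.mpr ⟨le_refl 0, by norm_num⟩) (Set.mem_Icc.mpr ⟨hU0.le, hU1⟩)
      (show (0:ℝ) ≤ 1 - v / U by linarith) hb0 (show (1 - v / U) + v / U = 1 by ring)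
    simp only [smul_eq_mul, mul_zero, zero_add] at this
    have hvv : v / U * U = v := div_mul_cancel₀ v hU0.ne'
    rw [hvv, hD0, mul_zero, zero_add] at this
    exact this
  have hcne : c ≠ 0 := hc.ne'
  -- reformulate root condition
  have hroot_iff : ∀ u : ℝ, ((h ^ 2 + t * D u) / c - u = 0) ↔ (h ^ 2 + t * D u - c * u = 0) := by
    intro u
    rw [sub_eq_zero, div_eq_iff hcne, sub_eq_zero]
    constructor <;> intro hh <;> linarith
  have hstat' : h ^ 2 + D U = c * U := by
    field_simp at hstat; linarith
  -- trivial case U = 0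
  rcases eq_or_lt_of_le hU.1 with hU0 | hU0
  · -- U = 0
    have hUz : U = 0 := hU0.symm
    have hh0 : h = 0 := by
      rw [hUz, hD0] at hstat'
      nlinarith
    refine ⟨0, ?_, ?_, ?_, fun _ => rfl, fun hne => absurd hh0 hne⟩
    · simp [hUz]
    · rw [hroot_iff]; rw [hD0]; ring_nf; nlinarith [sq_nonneg h]
    · intro u hu _
      rw [hUz] at hu
      simpa using hu
  -- now U > 0
  have hDU : 0 < D U := by
    rw [← hD0]
    exact hDmono ⟨le_refl 0, by norm_num⟩ ⟨hU.1, hU.2⟩ hU0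
  -- positivity of D on (0,U]
  have hDpos : ∀ v, 0 < v → v ≤ U → 0 < D v := by
    intro v hv hvU
    rw [← hD0]
    exact hDmono ⟨le_refl 0, by norm_num⟩ ⟨hv.le, hvU.trans hU.2⟩ hv
  -- strict bound : t * D v < c * v for v ∈ (0,U] (uses hstat')
  have hbound : ∀ v, 0 < v → v ≤ U → t * D v < c * v := by
    intro v hv hvU
    have h1 : D v ≤ (v / U) * D U := hkey hU0 v hv.le hvU
    have h2 : t * D v < D v := by nlinarith [hDpos v hv hvU, ht.1, ht.2]
    have h3 : (v / U) * D U ≤ c * v := by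
      have : D U ≤ c * U := by nlinarith [sq_nonneg h]
      rw [div_mul_eq_mul_div, div_le_iff₀ hU0]
      nlinarith
    linarith
  -- no roots in [-U, 0)
  have hneg : ∀ u, -U ≤ u → u < 0 → 0 < h ^ 2 + t * D u - c * u := by
    intro u hu1 hu2
    have hv : t * D (-u) < c * (-u) := hbound (-u) (by linarith) (by linarith)
    have hdu : D u = -D (-u) := by rw [← hDodd (-u), neg_neg]
    have h2 : t * D u = -(t * D (-u)) := by rw [hdu]; ring
    nlinarith [sq_nonneg h]
  by_cases hh : h = 0
  · -- case h = 0 : ustar = 0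
    refine ⟨0, by constructor <;> linarith [hU.1], ?_, ?_, fun _ => rfl,
      fun hne => absurd hh hne⟩
    · rw [hroot_iff, hh, hD0]; ring
    · intro u hu hroot
      rw [hroot_iff] at hroot
      rcases lt_trichotomy u 0 with h1 | h1 | h1
      · exfalso; have := hneg u hu.1 h1; linarith
      · exact h1
      · exfalso
        have := hbound u h1 hu.2
        rw [hh] at hroot
        nlinarith
  · -- case h ≠ 0
    have hh2 : 0 < h ^ 2 := by positivity
    have hφU : h ^ 2 + t * D U - c * U < 0 := by nlinarith [ht.2, hDU]
    -- IVT
    have hcont : ContinuousOn (fun u => h ^ 2 + t * D u - c * u) (Icc 0 U) :=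
      (continuous_const.add (continuous_const.mul hDcont)).sub
        (continuous_const.mul continuous_id) |>.continuousOn
    have h0mem : (0:ℝ) ∈ Ioo (h ^ 2 + t * D U - c * U) (h ^ 2 + t * D 0 - c * 0) := by
      constructor
      · exact hφU
      · rw [hD0]; simpa using hh2
    obtain ⟨u₀, hu₀mem, hu₀⟩ := intermediate_value_Ioo' hU0.le hcont h0mem
    have hu₀root : h ^ 2 + t * D u₀ - c * u₀ = 0 := hu₀
    -- uniqueness helper : any root in (0,U] equals any other root in (0,U]
    have hno2 : ∀ u₁ u₂, 0 < u₁ → u₁ < u₂ → u₂ < U →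
        h ^ 2 + t * D u₁ - c * u₁ = 0 → h ^ 2 + t * D u₂ - c * u₂ = 0 → False := by
      intro u₁ u₂ h₁ hlt h₂U hr₁ hr₂
      have hden : 0 < U - u₁ := by linarith
      obtain ⟨a, b, ha0, hb0, hab, hcomb⟩ :
          ∃ a b : ℝ, 0 ≤ a ∧ 0 < b ∧ a + b = 1 ∧ a * u₁ + b * U = u₂ := by
        refine ⟨(U - u₂) / (U - u₁), (u₂ - u₁) / (U - u₁),
          div_nonneg (by linarith) hden.le, div_pos (by linarith) hden, ?_, ?_⟩
        · rw [← add_div, div_eq_one_iff_eq hden.ne']; ring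
        · field_simp; ring
      have hconv := hDconv.2 (Set.mem_Icc.mpr ⟨h₁.le, by linarith [hU.2]⟩)
        (Set.mem_Icc.mpr ⟨hU.1, hU.2⟩) ha0 hb0.le hab
      simp only [smul_eq_mul] at hconv
      rw [hcomb] at hconv
      have e1 : t * D u₂ ≤ a * (t * D u₁) + b * (t * D U) := by
        have := mul_le_mul_of_nonneg_left hconv ht.1.le
        nlinarith [this]
      have e2 : c * u₂ = a * (c * u₁) + b * (c * U) := by rw [← hcomb]; ring
      have e3 : h ^ 2 = a * h ^ 2 + b * h ^ 2 := by rw [← add_mul, hab, one_mul]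
      have e4 : a * (h ^ 2 + t * D u₁ - c * u₁) = 0 := by rw [hr₁]; ring
      have e5 : b * (h ^ 2 + t * D U - c * U) < 0 := mul_neg_of_pos_of_neg hb0 hφU
      nlinarith [e1, e2, e3, e4, e5]
    have huniq : ∀ u₁ u₂, 0 < u₁ → u₁ ≤ U → 0 < u₂ → u₂ ≤ U →
        h ^ 2 + t * D u₁ - c * u₁ = 0 → h ^ 2 + t * D u₂ - c * u₂ = 0 → u₁ = u₂ := by
      intro u₁ u₂ h₁ h₁U h₂ h₂U hr₁ hr₂
      have hne₁ : u₁ < U := lt_of_le_of_ne h₁U (fun he => by rw [he] at hr₁; linarith)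
      have hne₂ : u₂ < U := lt_of_le_of_ne h₂U (fun he => by rw [he] at hr₂; linarith)
      rcases lt_trichotomy u₁ u₂ with hlt | heq | hgt
      · exact absurd (hno2 u₁ u₂ h₁ hlt hne₂ hr₁ hr₂) not_false
      · exact heq
      · exact absurd (hno2 u₂ u₁ h₂ hgt hne₁ hr₂ hr₁) not_false
    refine ⟨u₀, ⟨by linarith [hu₀mem.1], hu₀mem.2.le⟩, ?_, ?_, fun he => absurd he hh, fun _ => hu₀mem⟩
    · rw [hroot_iff]; exact hu₀root
    · intro u hu hroot
      rw [hroot_iff] at hroot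
      rcases lt_trichotomy u 0 with h1 | h1 | h1
      · exfalso; have := hneg u hu.1 h1; linarith
      · exfalso; rw [h1, hD0] at hroot; nlinarith
      · exact huniq u u₀ h1 hu.2 hu₀mem.1 hu₀mem.2.le hroot hu₀root
end

section
/- For every u ∈ [−1,1] with |u| ≤ u_x one has 𝒫_u(x,b,0) = 2𝒫(x,b). (At λ = 0 and constrained overlaps inside [−u_x,u_x], the two-dimensional Guerra bound equals twice the Crisanti–Sommers functional.) -/
open MeasureTheory Real Set

/-- Second derivative of `ξ`. -/
noncomputable def xi2 (ξ : ℝ → ℝ) : ℝ → ℝ := deriv (deriv ξ)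

/-- `d(q) = ∫_q^1 ξ''(s) x(s) ds`. -/
noncomputable def dFun (ξ x : ℝ → ℝ) (q : ℝ) : ℝ := ∫ s in q..1, xi2 ξ s * x s

/-- `φ_u(q) = d(u) + ((1-t)/(1+t))(d(q) - d(u))`. -/
noncomputable def phiFun (ξ x : ℝ → ℝ) (t u q : ℝ) : ℝ :=
  dFun ξ x u + (1 - t) / (1 + t) * (dFun ξ x q - dFun ξ x u)

/-- The functional `T_u(x,b,λ)` of Proposition 2.1. -/
noncomputable def TFun (ξ x : ℝ → ℝ) (t b u lam : ℝ) : ℝ :=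
  let η : ℝ := if 0 ≤ u then 1 else -1
  (1 / 2) * Real.log (b ^ 2 / (b ^ 2 - lam ^ 2))
    + (1 + t) / 2 * (∫ s in (0:ℝ)..|u|, xi2 ξ s / (b - η * lam - dFun ξ x s))
    + (1 - t) / 2 * (∫ s in (0:ℝ)..|u|, xi2 ξ s / (b + η * lam - phiFun ξ x t |u| s))
    + (1 / 2) * (∫ s in |u|..(1:ℝ), xi2 ξ s / (b - lam - dFun ξ x s))
    + (1 / 2) * (∫ s in |u|..(1:ℝ), xi2 ξ s / (b + lam - dFun ξ x s))
    - lam * u + b - 1 - Real.log b - ∫ q in (0:ℝ)..1, xi2 ξ q * x q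

/-- The two-dimensional Guerra functional `𝒫_u(x,b,λ)`. -/
noncomputable def GuerraP (ξ x : ℝ → ℝ) (t h b u lam : ℝ) : ℝ :=
  if 0 ≤ u then TFun ξ x t b u lam + h ^ 2 / (b - lam - dFun ξ x 0)
  else TFun ξ x t b u lam + h ^ 2 / (b - lam - phiFun ξ x t |u| 0)

/-- The Crisanti–Sommers functional `𝒫(x,b)`. -/
noncomputable def CSFun (ξ x : ℝ → ℝ) (h b : ℝ) : ℝ :=
  (1 / 2) * (h ^ 2 / (b - dFun ξ x 0)
    + (∫ q in (0:ℝ)..1, xi2 ξ q / (b - dFun ξ x q))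
    + b - 1 - Real.log b - ∫ q in (0:ℝ)..1, xi2 ξ q * x q)

/-- At `λ = 0`, for constrained overlaps inside `[-u_x, u_x]`, the Guerra bound
equals twice the Crisanti–Sommers functional. -/
theorem guerra_eq_twice_CS_inside
    (ξ x : ℝ → ℝ) (h t b ux : ℝ)
    (hξ_even : ∀ s, ξ (-s) = ξ s)
    (hξ_smooth : ContDiff ℝ 3 ξ)
    (hξ'' : ∀ s ∈ Set.Ioc (0:ℝ) 1, 0 < xi2 ξ s)
    (hξ''' : ∀ s ∈ Set.Icc (0:ℝ) 1, 0 ≤ deriv (xi2 ξ) s)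
    (hx_mono : MonotoneOn x (Set.Icc 0 1))
    (hx_mem : ∀ q ∈ Set.Icc (0:ℝ) 1, x q ∈ Set.Icc (0:ℝ) 1)
    (hx_rc : ∀ q ∈ Set.Ico (0:ℝ) 1, ContinuousWithinAt x (Set.Ici q) q)
    (hx_one : x 1 = 1)
    (hux_mem : ux ∈ Set.Icc (0:ℝ) 1)
    (hux_lower : ∀ q ∈ Set.Ico (0:ℝ) ux, x q = 0)
    (hux_upper : ∀ q ∈ Set.Ioc ux 1, 0 < x q)
    (ht : t ∈ Set.Ioo (0:ℝ) 1)
    (hb : max 1 (∫ s in (0:ℝ)..1, xi2 ξ s * x s) < b) :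
    ∀ u ∈ Set.Icc (-1:ℝ) 1, |u| ≤ ux →
      GuerraP ξ x t h b u 0 = 2 * CSFun ξ x h b := by
  intro u hu huabs
  obtain ⟨hux0, hux1⟩ := hux_mem
  have hb1 : (1:ℝ) < b := lt_of_le_of_lt (le_max_left _ _) hb
  have hbI : dFun ξ x 0 < b := by rw [dFun]; exact lt_of_le_of_lt (le_max_right _ _) hb
  have hb0 : (0:ℝ) < b := by linarith
  have hu0 : (0:ℝ) ≤ |u| := abs_nonneg u
  have hu1 : |u| ≤ 1 := le_trans huabs hux1
  have habsI : |u| ∈ Icc (0:ℝ) 1 := ⟨hu0, hu1⟩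
  -- continuity of ξ''
  have hcont : Continuous (xi2 ξ) := by
    have h0 : ContDiff ℝ ((2:ℕ)+1) ξ := by exact_mod_cast hξ_smooth
    have h1 : ContDiff ℝ 2 (deriv ξ) := (contDiff_succ_iff_deriv.mp h0).2.2
    exact h1.continuous_deriv (by norm_num)
  -- the clamped monotone version of x
  set y : ℝ → ℝ := fun s => x (max 0 (min 1 s)) with hy
  have hclamp : ∀ s : ℝ, max 0 (min 1 s) ∈ Icc (0:ℝ) 1 :=
    fun s => ⟨le_max_left _ _, max_le zero_le_one (min_le_left _ _)⟩
  have hymono : Monotone y := fun a c hac =>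
    hx_mono (hclamp a) (hclamp c) (max_le_max le_rfl (min_le_min le_rfl hac))
  have hybd : ∀ s, ‖y s‖ ≤ 1 := fun s => by
    have h2 := hx_mem _ (hclamp s)
    rw [Real.norm_eq_abs, abs_le]
    exact ⟨by linarith [h2.1], h2.2⟩
  set F : ℝ → ℝ := fun s => y s * xi2 ξ s with hF
  have hFint : ∀ a c : ℝ, IntervalIntegrable F volume a c := by
    intro a c
    have h1 : IntervalIntegrable (xi2 ξ) volume a c := hcont.intervalIntegrable a c
    rw [intervalIntegrable_iff] at h1 ⊢
    exact h1.bdd_mul (c := 1) hymono.measurable.aestronglyMeasurable (Filter.Eventually.of_forall hybd)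
  have hFeq : ∀ s ∈ Icc (0:ℝ) 1, F s = xi2 ξ s * x s := fun s hs => by
    simp only [hF, hy, min_eq_right hs.2, max_eq_right hs.1, mul_comm]
  set f : ℝ → ℝ := fun s => xi2 ξ s * x s with hf
  have hfint : IntervalIntegrable f volume 0 1 := by
    apply (hFint 0 1).congr_ae
    rw [uIoc_of_le zero_le_one]
    refine (ae_restrict_iff' measurableSet_Ioc).mpr (Filter.Eventually.of_forall fun s hs => ?_)
    exact hFeq s ⟨hs.1.le, hs.2⟩
  have hfsub : ∀ a c : ℝ, a ∈ Icc (0:ℝ) 1 → c ∈ Icc (0:ℝ) 1 → IntervalIntegrable f volume a c := by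
    intro a c ha hc
    apply hfint.mono_set
    rw [uIcc_of_le zero_le_one]
    exact uIcc_subset_Icc ha hc
  have hdf : ∀ q : ℝ, dFun ξ x q = ∫ s in q..1, f s := by intro q; rw [dFun]
  -- the integral of f vanishes over [0,s] for s ≤ ux
  have hzero : ∀ s ∈ Icc (0:ℝ) ux, (∫ r in (0:ℝ)..s, f r) = 0 := by
    intro s hs
    have hae : ∀ᵐ r : ℝ, r ∈ Set.uIoc 0 s → f r = (0:ℝ) := by
      have hne : ∀ᵐ r : ℝ, r ≠ ux := by
        simpa [ae_iff] using Real.volume_singleton (x := ux)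
      filter_upwards [hne] with r hrne hr
      rw [uIoc_of_le hs.1] at hr
      have hx0 : x r = 0 :=
        hux_lower r ⟨hr.1.le, lt_of_le_of_ne (hr.2.trans hs.2) hrne⟩
      simp [hf, hx0]
    rw [intervalIntegral.integral_congr_ae hae]
    simp
  -- d is constant on [0, ux]
  have hdconst : ∀ s ∈ Icc (0:ℝ) ux, dFun ξ x s = dFun ξ x 0 := by
    intro s hs
    have hsI : s ∈ Icc (0:ℝ) 1 := ⟨hs.1, hs.2.trans hux1⟩
    have hadd := intervalIntegral.integral_add_adjacent_intervals
      (hfsub 0 s ⟨le_rfl, zero_le_one⟩ hsI) (hfsub s 1 hsI ⟨zero_le_one, le_rfl⟩)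
    rw [hdf, hdf, ← hadd, hzero s hs, zero_add]
  -- nonnegativity of ξ'' on [0,1]
  have hxi2_0 : 0 ≤ xi2 ξ 0 := by
    have hne : (nhdsWithin (0:ℝ) (Ioc 0 1)).NeBot := by
      apply mem_closure_iff_nhdsWithin_neBot.mp
      rw [closure_Ioc (one_ne_zero).symm]
      exact ⟨le_rfl, zero_le_one⟩
    have htd : Filter.Tendsto (xi2 ξ) (nhdsWithin 0 (Ioc 0 1)) (nhds (xi2 ξ 0)) :=
      (hcont.tendsto 0).mono_left nhdsWithin_le_nhds
    exact ge_of_tendsto htd (by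
      filter_upwards [self_mem_nhdsWithin] with s hs using (hξ'' s hs).le)
  have hxi2nn : ∀ s ∈ Icc (0:ℝ) 1, 0 ≤ xi2 ξ s := by
    intro s hs
    rcases eq_or_lt_of_le hs.1 with h1 | h1
    · rw [← h1]; exact hxi2_0
    · exact (hξ'' s ⟨h1, hs.2⟩).le
  have hfnn : ∀ s ∈ Icc (0:ℝ) 1, 0 ≤ f s := by
    intro s hs; exact mul_nonneg (hxi2nn s hs) (hx_mem s hs).1
  -- bounds on d
  have hbq : ∀ q ∈ Icc (0:ℝ) 1, 0 < b - dFun ξ x q := by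
    intro q hq
    have hadd := intervalIntegral.integral_add_adjacent_intervals
      (hfsub 0 q ⟨le_rfl, zero_le_one⟩ hq) (hfsub q 1 hq ⟨zero_le_one, le_rfl⟩)
    have h0 : 0 ≤ ∫ r in (0:ℝ)..q, f r :=
      intervalIntegral.integral_nonneg hq.1 (fun s hs => hfnn s ⟨hs.1, hs.2.trans hq.2⟩)
    have : dFun ξ x q ≤ dFun ξ x 0 := by rw [hdf, hdf, ← hadd]; linarith
    linarith
  -- the continuous primitive D agreeing with d on [0,1]
  set D : ℝ → ℝ := fun q => ∫ s in q..1, F s with hD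
  have hDcont : Continuous D := by
    have h1 := (intervalIntegral.continuous_primitive hFint 1).neg
    have h2 : D = fun q => -∫ s in (1:ℝ)..q, F s := by
      funext q; rw [hD, intervalIntegral.integral_symm q 1, neg_neg]
    rw [h2]; exact h1
  have hdD : ∀ q ∈ Icc (0:ℝ) 1, dFun ξ x q = D q := by
    intro q hq
    rw [hdf]
    refine intervalIntegral.integral_congr fun s hs => ?_
    rw [uIcc_of_le hq.2] at hs
    exact (hFeq s ⟨hq.1.trans hs.1, hs.2⟩).symm
  -- the continuous integrand G
  set G : ℝ → ℝ := fun s => xi2 ξ s / (b - D s) with hG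
  have hGcont : ContinuousOn G (Icc 0 1) := by
    refine hcont.continuousOn.div (continuous_const.sub hDcont).continuousOn fun s hs => ?_
    have := hbq s hs
    rw [← hdD s hs]
    linarith
  have hGint : ∀ a c : ℝ, a ∈ Icc (0:ℝ) 1 → c ∈ Icc (0:ℝ) 1 → IntervalIntegrable G volume a c :=
    fun a c ha hc => (hGcont.mono (uIcc_subset_Icc ha hc)).intervalIntegrable
  -- φ coincides with d on [0,|u|]
  have hphi : ∀ s ∈ Icc (0:ℝ) |u|, phiFun ξ x t |u| s = dFun ξ x s := by
    intro s hs
    have h1 : dFun ξ x s = dFun ξ x 0 := hdconst s ⟨hs.1, hs.2.trans huabs⟩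
    have h2 : dFun ξ x |u| = dFun ξ x 0 := hdconst |u| ⟨hu0, huabs⟩
    rw [phiFun, h1, h2]; ring
  -- rewrite all the integrals in terms of G
  have hI1 : (∫ s in (0:ℝ)..|u|, xi2 ξ s / (b - dFun ξ x s)) = ∫ s in (0:ℝ)..|u|, G s := by
    refine intervalIntegral.integral_congr fun s hs => ?_
    rw [uIcc_of_le hu0] at hs
    rw [hG]; rw [hdD s ⟨hs.1, hs.2.trans hu1⟩]
  have hI2 : (∫ s in (0:ℝ)..|u|, xi2 ξ s / (b - phiFun ξ x t |u| s)) = ∫ s in (0:ℝ)..|u|, G s := by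
    refine intervalIntegral.integral_congr fun s hs => ?_
    rw [uIcc_of_le hu0] at hs
    rw [hphi s hs, hG, hdD s ⟨hs.1, hs.2.trans hu1⟩]
  have hI3 : (∫ s in |u|..(1:ℝ), xi2 ξ s / (b - dFun ξ x s)) = ∫ s in |u|..(1:ℝ), G s := by
    refine intervalIntegral.integral_congr fun s hs => ?_
    rw [uIcc_of_le hu1] at hs
    rw [hG, hdD s ⟨hu0.trans hs.1, hs.2⟩]
  have hI4 : (∫ q in (0:ℝ)..1, xi2 ξ q / (b - dFun ξ x q)) = ∫ s in (0:ℝ)..1, G s := by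
    refine intervalIntegral.integral_congr fun s hs => ?_
    rw [uIcc_of_le zero_le_one] at hs
    rw [hG, hdD s hs]
  have hadd : (∫ s in (0:ℝ)..|u|, G s) + ∫ s in |u|..(1:ℝ), G s = ∫ s in (0:ℝ)..1, G s :=
    intervalIntegral.integral_add_adjacent_intervals
      (hGint 0 |u| ⟨le_rfl, zero_le_one⟩ habsI) (hGint |u| 1 habsI ⟨zero_le_one, le_rfl⟩)
  -- the log term vanishes
  have hlog : Real.log (b ^ 2 / (b ^ 2 - 0 ^ 2)) = 0 := by
    have he : b ^ 2 - 0 ^ 2 = b ^ 2 := by ring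
    rw [he, div_self (pow_ne_zero 2 hb0.ne'), Real.log_one]
  -- compute T
  have hT : TFun ξ x t b u 0 =
      (∫ s in (0:ℝ)..1, G s) + b - 1 - Real.log b - ∫ q in (0:ℝ)..1, xi2 ξ q * x q := by
    simp only [TFun, mul_zero, add_zero, sub_zero, zero_mul]
    rw [hlog, hI1, hI2, hI3, ← hadd]
    ring
  have hphi0 : phiFun ξ x t |u| 0 = dFun ξ x 0 := hphi 0 ⟨le_rfl, hu0⟩
  rw [GuerraP]
  by_cases hu' : 0 ≤ u
  · rw [if_pos hu', hT, CSFun, hI4, sub_zero]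
    ring
  · rw [if_neg hu', hT, CSFun, hI4, hphi0, sub_zero]
    ring
end

section
/- For every u ∈ [−1,1] with |u| > u_x one has the strict inequality 𝒫_u(x,b,0) < 2𝒫(x,b). (There is a strict free-energy cost at λ = 0 for constrained overlaps outside [−u_x, u_x].) -/
open MeasureTheory Real Set

/-- At `λ = 0`, for constrained overlaps outside `[-u_x, u_x]`, there is a strict
free-energy cost in the Guerra bound. -/
theorem guerra_lt_twice_CS_outside
    (ξ x : ℝ → ℝ) (h t b ux : ℝ)
    (hξ_even : ∀ s, ξ (-s) = ξ s)
    (hξ_smooth : ContDiff ℝ 3 ξ)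
    (hξ'' : ∀ s ∈ Set.Ioc (0:ℝ) 1, 0 < xi2 ξ s)
    (hξ''' : ∀ s ∈ Set.Icc (0:ℝ) 1, 0 ≤ deriv (xi2 ξ) s)
    (hx_mono : MonotoneOn x (Set.Icc 0 1))
    (hx_mem : ∀ q ∈ Set.Icc (0:ℝ) 1, x q ∈ Set.Icc (0:ℝ) 1)
    (hx_rc : ∀ q ∈ Set.Ico (0:ℝ) 1, ContinuousWithinAt x (Set.Ici q) q)
    (hx_one : x 1 = 1)
    (hux_mem : ux ∈ Set.Icc (0:ℝ) 1)
    (hux_lower : ∀ q ∈ Set.Ico (0:ℝ) ux, x q = 0)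
    (hux_upper : ∀ q ∈ Set.Ioc ux 1, 0 < x q)
    (ht : t ∈ Set.Ioo (0:ℝ) 1)
    (hb : max 1 (∫ s in (0:ℝ)..1, xi2 ξ s * x s) < b) :
    ∀ u ∈ Set.Icc (-1:ℝ) 1, ux < |u| →
      GuerraP ξ x t h b u 0 < 2 * CSFun ξ x h b := by
  intro u hu huv
  obtain ⟨ht0, ht1⟩ := ht
  have hb1 : (1:ℝ) < b := lt_of_le_of_lt (le_max_left _ _) hb
  have hb0 : (0:ℝ) < b := lt_trans one_pos hb1
  have hDb : (∫ s in (0:ℝ)..1, xi2 ξ s * x s) < b := lt_of_le_of_lt (le_max_right _ _) hb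
  -- continuity of ξ''
  have hcont : Continuous (xi2 ξ) := by
    have h1 : ContDiff ℝ 2 (deriv ξ) :=
      (contDiff_succ_iff_deriv.mp (by exact_mod_cast hξ_smooth)).2.2
    exact (contDiff_one_iff_deriv.mp (h1.of_le (by norm_num))).2
  -- ξ'' ≥ 0 on [0,1]
  have hxi2_nonneg : ∀ s ∈ Icc (0:ℝ) 1, 0 ≤ xi2 ξ s := by
    intro s hs
    rcases eq_or_lt_of_le hs.1 with hseq | hslt
    · have htend : Filter.Tendsto (xi2 ξ) (nhdsWithin 0 (Ioi 0)) (nhds (xi2 ξ 0)) :=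
        (hcont.continuousAt).continuousWithinAt
      have : 0 ≤ xi2 ξ 0 := by
        refine ge_of_tendsto htend ?_
        filter_upwards [Ioo_mem_nhdsGT_of_mem (by constructor <;> norm_num : (0:ℝ) ∈ Ico 0 1)]
          with y hy
        exact (hξ'' y ⟨hy.1, hy.2.le⟩).le
      rwa [← hseq]
    · exact (hξ'' s ⟨hslt, hs.2⟩).le
  set g : ℝ → ℝ := fun s => xi2 ξ s * x s with hgdef
  have hg_int : ∀ p q : ℝ, p ∈ Icc (0:ℝ) 1 → q ∈ Icc (0:ℝ) 1 →
      IntervalIntegrable g volume p q := by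
    intro p q hp hq
    have hsub : uIcc p q ⊆ Icc (0:ℝ) 1 := by
      rw [← uIcc_of_le (zero_le_one' ℝ)]
      exact uIcc_subset_uIcc (by rwa [uIcc_of_le (zero_le_one' ℝ)])
        (by rwa [uIcc_of_le (zero_le_one' ℝ)])
    exact ((hx_mono.mono hsub).intervalIntegrable).continuousOn_mul hcont.continuousOn
  have hg_nonneg : ∀ s ∈ Icc (0:ℝ) 1, 0 ≤ g s := fun s hs =>
    mul_nonneg (hxi2_nonneg s hs) (hx_mem s hs).1
  have hd_split : ∀ p q : ℝ, p ∈ Icc (0:ℝ) 1 → q ∈ Icc (0:ℝ) 1 →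
      dFun ξ x p = (∫ s in p..q, g s) + dFun ξ x q := by
    intro p q hp hq
    rw [dFun, dFun,
      ← intervalIntegral.integral_add_adjacent_intervals (hg_int p q hp hq)
        (hg_int q 1 hq (right_mem_Icc.mpr zero_le_one))]
  have hd_nonneg : ∀ q ∈ Icc (0:ℝ) 1, 0 ≤ dFun ξ x q := by
    intro q hq
    exact intervalIntegral.integral_nonneg hq.2
      (fun s hs => hg_nonneg s ⟨hq.1.trans hs.1, hs.2⟩)
  have hd_mono : ∀ p q : ℝ, 0 ≤ p → p ≤ q → q ≤ 1 → dFun ξ x q ≤ dFun ξ x p := by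
    intro p q h0 hpq h1
    rw [hd_split p q ⟨h0, hpq.trans h1⟩ ⟨h0.trans hpq, h1⟩]
    have : 0 ≤ ∫ s in p..q, g s :=
      intervalIntegral.integral_nonneg hpq
        (fun s hs => hg_nonneg s ⟨h0.trans hs.1, hs.2.trans h1⟩)
    linarith
  have hd0 : dFun ξ x 0 = ∫ s in (0:ℝ)..1, g s := rfl
  have hdb : ∀ q ∈ Icc (0:ℝ) 1, dFun ξ x q < b := by
    intro q hq
    calc dFun ξ x q ≤ dFun ξ x 0 := hd_mono 0 q le_rfl hq.1 hq.2
    _ < b := by rw [hd0]; exact hDb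
  -- setup v
  have hux0 : 0 ≤ ux := hux_mem.1
  set v : ℝ := |u| with hvdef
  have hv1 : v ≤ 1 := abs_le.mpr ⟨hu.1, hu.2⟩
  have hv0 : 0 < v := lt_of_le_of_lt hux0 huv
  have hvmem : v ∈ Icc (0:ℝ) 1 := ⟨hv0.le, hv1⟩
  -- strict monotonicity at v
  have hd_strict : ∀ s, 0 ≤ s → s < v → dFun ξ x v < dFun ξ x s := by
    intro s hs0 hsv
    set m : ℝ := max s ux with hmdef
    have hm_lt : m < v := max_lt hsv huv
    have hm0 : 0 ≤ m := le_trans hs0 (le_max_left _ _)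
    have hmmem : m ∈ Icc (0:ℝ) 1 := ⟨hm0, hm_lt.le.trans hv1⟩
    have hsmem : s ∈ Icc (0:ℝ) 1 := ⟨hs0, (hsv.le.trans hv1)⟩
    have hpos : 0 < ∫ r in m..v, g r := by
      refine intervalIntegral.intervalIntegral_pos_of_pos_on (hg_int m v hmmem hvmem) ?_ hm_lt
      intro r hr
      have hr0 : 0 < r := lt_of_le_of_lt hm0 hr.1
      exact mul_pos (hξ'' r ⟨hr0, hr.2.le.trans hv1⟩)
        (hux_upper r ⟨lt_of_le_of_lt (le_max_right s ux) hr.1, hr.2.le.trans hv1⟩)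
    have h1 : dFun ξ x s = (∫ r in s..m, g r) + dFun ξ x m := hd_split s m hsmem hmmem
    have h2 : dFun ξ x m = (∫ r in m..v, g r) + dFun ξ x v := hd_split m v hmmem hvmem
    have h3 : 0 ≤ ∫ r in s..m, g r :=
      intervalIntegral.integral_nonneg (le_max_left s ux)
        (fun r hr => hg_nonneg r ⟨hs0.trans hr.1, hr.2.trans hmmem.2⟩)
    linarith
  -- continuity of d on [0,1]
  have hd_cont : ContinuousOn (dFun ξ x) (Icc 0 1) := by
    have hprim : ContinuousOn (fun q => ∫ s in (0:ℝ)..q, g s) (Icc 0 1) := by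
      have := intervalIntegral.continuousOn_primitive_interval' (μ := volume) (f := g)
        (hg_int 0 1 (left_mem_Icc.mpr zero_le_one) (right_mem_Icc.mpr zero_le_one))
        left_mem_uIcc
      rwa [uIcc_of_le (zero_le_one' ℝ)] at this
    have hcont2 : ContinuousOn (fun q => dFun ξ x 0 - ∫ s in (0:ℝ)..q, g s) (Icc 0 1) :=
      continuousOn_const.sub hprim
    refine hcont2.congr ?_
    intro q hq
    have := hd_split 0 q (left_mem_Icc.mpr zero_le_one) hq
    simp only
    linarith
  -- φ facts
  set c : ℝ := (1 - t) / (1 + t) with hcdef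
  have hc0 : 0 < c := div_pos (by linarith) (by linarith)
  have hc1 : c < 1 := by
    rw [hcdef, div_lt_one (by linarith)]; linarith
  have hphi_eq : ∀ s, phiFun ξ x t v s = dFun ξ x v + c * (dFun ξ x s - dFun ξ x v) := by
    intro s; rfl
  have hphi_le : ∀ s ∈ Icc (0:ℝ) v, phiFun ξ x t v s ≤ dFun ξ x s := by
    intro s hs
    have hds : dFun ξ x v ≤ dFun ξ x s := hd_mono s v hs.1 hs.2 hv1
    rw [hphi_eq]; nlinarith
  have hphi_lt : ∀ s, 0 ≤ s → s < v → phiFun ξ x t v s < dFun ξ x s := by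
    intro s hs0 hsv
    have hds : dFun ξ x v < dFun ξ x s := hd_strict s hs0 hsv
    rw [hphi_eq]; nlinarith
  have hphi_lt_b : ∀ s ∈ Icc (0:ℝ) v, phiFun ξ x t v s < b := by
    intro s hs
    exact lt_of_le_of_lt (hphi_le s hs) (hdb s ⟨hs.1, hs.2.trans hv1⟩)
  have hphi_cont : ContinuousOn (phiFun ξ x t v) (Icc 0 v) := by
    have : ContinuousOn (dFun ξ x) (Icc 0 v) :=
      hd_cont.mono (Icc_subset_Icc le_rfl hv1)
    exact continuousOn_const.add (continuousOn_const.mul (this.sub continuousOn_const))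
  -- integrands
  have hf1_cont : ContinuousOn (fun s => xi2 ξ s / (b - dFun ξ x s)) (Icc 0 1) := by
    refine hcont.continuousOn.div (continuousOn_const.sub hd_cont) ?_
    intro s hs
    exact (sub_pos.mpr (hdb s hs)).ne'
  have hf2_cont : ContinuousOn (fun s => xi2 ξ s / (b - phiFun ξ x t v s)) (Icc 0 v) := by
    refine hcont.continuousOn.div (continuousOn_const.sub hphi_cont) ?_
    intro s hs
    exact (sub_pos.mpr (hphi_lt_b s hs)).ne'
  have hA_int : IntervalIntegrable (fun s => xi2 ξ s / (b - dFun ξ x s)) volume 0 v := by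
    apply (hf1_cont.mono (Icc_subset_Icc le_rfl hv1)).intervalIntegrable_of_Icc hv0.le
  have hB_int : IntervalIntegrable (fun s => xi2 ξ s / (b - phiFun ξ x t v s)) volume 0 v :=
    hf2_cont.intervalIntegrable_of_Icc hv0.le
  have hC_int : IntervalIntegrable (fun s => xi2 ξ s / (b - dFun ξ x s)) volume v 1 := by
    apply (hf1_cont.mono (Icc_subset_Icc hv0.le le_rfl)).intervalIntegrable_of_Icc hv1
  set A : ℝ := ∫ s in (0:ℝ)..v, xi2 ξ s / (b - dFun ξ x s) with hAdef
  set B : ℝ := ∫ s in (0:ℝ)..v, xi2 ξ s / (b - phiFun ξ x t v s) with hBdef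
  set C : ℝ := ∫ s in v..(1:ℝ), xi2 ξ s / (b - dFun ξ x s) with hCdef
  have hE : (∫ q in (0:ℝ)..1, xi2 ξ q / (b - dFun ξ x q)) = A + C :=
    (intervalIntegral.integral_add_adjacent_intervals hA_int hC_int).symm
  -- B < A
  have hAB : B < A := by
    rw [← sub_pos, hAdef, hBdef, ← intervalIntegral.integral_sub hA_int hB_int]
    refine intervalIntegral.intervalIntegral_pos_of_pos_on (hA_int.sub hB_int) ?_ hv0
    intro s hs
    have hs1 : s ∈ Icc (0:ℝ) 1 := ⟨hs.1.le, hs.2.le.trans hv1⟩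
    have hxi : 0 < xi2 ξ s := hξ'' s ⟨hs.1, hs1.2⟩
    have hdlt : dFun ξ x s < b := hdb s hs1
    have hplt : phiFun ξ x t v s < dFun ξ x s := hphi_lt s hs.1.le hs.2
    have h1 : 0 < b - dFun ξ x s := by linarith
    have h2 : b - dFun ξ x s < b - phiFun ξ x t v s := by linarith
    have := div_lt_div_of_pos_left hxi h1 h2
    linarith
  -- final algebra
  have hDm : dFun ξ x 0 < b := hdb 0 (left_mem_Icc.mpr zero_le_one)
  have hlog : Real.log (b ^ 2 / (b ^ 2 - 0 ^ 2)) = 0 := by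
    have e1 : b ^ 2 - 0 ^ 2 = b ^ 2 := by ring
    rw [e1, div_self (by positivity : (b:ℝ)^2 ≠ 0), Real.log_one]
  have key : (1 + t) / 2 * A + (1 - t) / 2 * B < A := by
    have h1 : (1 - t) / 2 * B < (1 - t) / 2 * A :=
      mul_lt_mul_of_pos_left hAB (by linarith)
    nlinarith
  by_cases hu0 : 0 ≤ u
  · rw [GuerraP, if_pos hu0, TFun, CSFun]
    simp only [← hvdef, if_pos hu0, hlog, ← hAdef, ← hBdef, ← hCdef, hE]
    rw [← hgdef]  -- might not be needed
    simp only [mul_zero, sub_zero, add_zero, zero_mul, one_mul, mul_one]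
    linarith
  · rw [GuerraP, if_neg hu0, TFun, CSFun]
    simp only [← hvdef, if_neg hu0, hlog, ← hAdef, ← hBdef, ← hCdef, hE]
    have hphi0 : phiFun ξ x t v 0 ≤ dFun ξ x 0 := hphi_le 0 ⟨le_rfl, hv0.le⟩
    have hphi0b : phiFun ξ x t v 0 < b := hphi_lt_b 0 ⟨le_rfl, hv0.le⟩
    have hh : h ^ 2 / (b - phiFun ξ x t v 0) ≤ h ^ 2 / (b - dFun ξ x 0) :=
      div_le_div_of_nonneg_left (sq_nonneg h) (by linarith) (by linarith)
    simp only [mul_zero, sub_zero, add_zero, zero_mul, one_mul, mul_one, neg_mul]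
    linarith
end

section
/- For every u ∈ [−1,1] with |u| ≤ u_x, the function λ ↦ 𝒫_u(x,b,λ) is differentiable at λ = 0 with derivative equal to f(u) = (h² + tξ'(u))/(b − d(0))² − u. -/
open MeasureTheory Real Set

/-- For `|u| ≤ u_x`, the map `λ ↦ 𝒫_u(x,b,λ)` is differentiable at `λ = 0` with
derivative `f(u) = (h² + tξ'(u))/(b - d(0))² - u`. -/
theorem guerra_hasDerivAt_zero
    (ξ x : ℝ → ℝ) (h t b ux : ℝ)
    (hξ_even : ∀ s, ξ (-s) = ξ s)
    (hξ_smooth : ContDiff ℝ 3 ξ)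
    (hξ'' : ∀ s ∈ Set.Ioc (0:ℝ) 1, 0 < xi2 ξ s)
    (hξ''' : ∀ s ∈ Set.Icc (0:ℝ) 1, 0 ≤ deriv (xi2 ξ) s)
    (hx_mono : MonotoneOn x (Set.Icc 0 1))
    (hx_mem : ∀ q ∈ Set.Icc (0:ℝ) 1, x q ∈ Set.Icc (0:ℝ) 1)
    (hx_rc : ∀ q ∈ Set.Ico (0:ℝ) 1, ContinuousWithinAt x (Set.Ici q) q)
    (hx_one : x 1 = 1)
    (hux_mem : ux ∈ Set.Icc (0:ℝ) 1)
    (hux_lower : ∀ q ∈ Set.Ico (0:ℝ) ux, x q = 0)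
    (hux_upper : ∀ q ∈ Set.Ioc ux 1, 0 < x q)
    (ht : t ∈ Set.Ioo (0:ℝ) 1)
    (hb : max 1 (∫ s in (0:ℝ)..1, xi2 ξ s * x s) < b) :
    ∀ u ∈ Set.Icc (-1:ℝ) 1, |u| ≤ ux →
      HasDerivAt (fun lam => GuerraP ξ x t h b u lam)
        ((h ^ 2 + t * deriv ξ u) / (b - dFun ξ x 0) ^ 2 - u) 0 := by
  intro u hu huux
  obtain ⟨ht0, ht1⟩ := ht
  have hb1 : (1:ℝ) < b := lt_of_le_of_lt (le_max_left _ _) hb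
  have hd0b : dFun ξ x 0 < b := lt_of_le_of_lt (le_max_right _ _) hb
  have hu0 : 0 ≤ |u| := abs_nonneg u
  have hu1 : |u| ≤ 1 := abs_le.mpr hu
  have hux1 : ux ≤ 1 := hux_mem.2
  -- smoothness facts about ξ
  have h3 : ContDiff ℝ (2 + 1) ξ := by
    have : ((3:ℕ) : WithTop ℕ∞) = 2 + 1 := by norm_num
    exact this ▸ hξ_smooth
  rw [contDiff_succ_iff_deriv] at h3
  have hD1 : Differentiable ℝ ξ := h3.1
  have h2 : ContDiff ℝ (1 + 1) (deriv ξ) := by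
    have : ((2:ℕ) : WithTop ℕ∞) = 1 + 1 := by norm_num
    exact this ▸ h3.2.2
  rw [contDiff_succ_iff_deriv] at h2
  have hD2 : Differentiable ℝ (deriv ξ) := h2.1
  have hcont2 : Continuous (xi2 ξ) := h2.2.2.continuous
  -- ξ' is odd
  have hodd : ∀ y : ℝ, deriv ξ (-y) = -deriv ξ y := by
    intro y
    have h1 : HasDerivAt (fun s : ℝ => ξ (-s)) (deriv ξ (-y) * (-1)) y :=
      HasDerivAt.comp y (hD1 (-y)).hasDerivAt (hasDerivAt_neg y)
    have h2' : (fun s : ℝ => ξ (-s)) = ξ := funext hξ_even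
    rw [h2'] at h1
    have := h1.unique (hD1 y).hasDerivAt
    linarith [this]
  have hξ'0 : deriv ξ 0 = 0 := by have := hodd 0; simp at this; linarith
  -- bound on ξ''
  obtain ⟨M, hM⟩ : ∃ M : ℝ, ∀ s ∈ Icc (0:ℝ) 1, ‖xi2 ξ s‖ ≤ M :=
    IsCompact.exists_bound_of_continuousOn isCompact_Icc hcont2.continuousOn
  have hM0 : 0 ≤ M := le_trans (norm_nonneg _) (hM 0 ⟨le_refl _, by norm_num⟩)
  -- integrability of f = ξ'' x on [0,1]
  set f : ℝ → ℝ := fun s => xi2 ξ s * x s with hf_def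
  have hx_meas : AEMeasurable x (volume.restrict (Icc (0:ℝ) 1)) :=
    aemeasurable_restrict_of_monotoneOn measurableSet_Icc hx_mono
  have hf_meas : AEStronglyMeasurable f (volume.restrict (Icc (0:ℝ) 1)) :=
    (hcont2.measurable.aemeasurable.mul hx_meas).aestronglyMeasurable
  have hf_int : IntegrableOn f (Icc (0:ℝ) 1) := by
    refine Integrable.mono' (integrable_const M) hf_meas ?_
    rw [ae_restrict_iff' measurableSet_Icc]
    refine Filter.Eventually.of_forall fun s hs => ?_
    have h1 : |x s| ≤ 1 := by
      have := hx_mem s hs; rw [abs_le]; constructor <;> linarith [this.1, this.2]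
    calc ‖f s‖ = ‖xi2 ξ s‖ * |x s| := by rw [hf_def]; simp [abs_mul]
      _ ≤ M * 1 := mul_le_mul (hM s hs) h1 (abs_nonneg _) hM0
      _ = M := mul_one M
  have hf_ii : ∀ p q : ℝ, p ∈ Icc (0:ℝ) 1 → q ∈ Icc (0:ℝ) 1 → IntervalIntegrable f volume p q := by
    intro p q hp hq
    exact (hf_int.mono_set (uIcc_subset_Icc hp hq)).intervalIntegrable
  -- d q = d 0 - ∫_0^q f for q ∈ [0,1]
  have hd_split : ∀ q ∈ Icc (0:ℝ) 1, dFun ξ x q = dFun ξ x 0 - ∫ s in (0:ℝ)..q, f s := by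
    intro q hq
    have := intervalIntegral.integral_add_adjacent_intervals
      (hf_ii 0 q ⟨le_refl _, by norm_num⟩ hq) (hf_ii q 1 hq ⟨by norm_num, le_refl 1⟩)
    simp only [dFun]
    linarith [this]
  -- d is continuous on [0,1]
  have hd_cont : ContinuousOn (dFun ξ x) (Icc (0:ℝ) 1) := by
    have hprim : ContinuousOn (fun q => ∫ s in (0:ℝ)..q, f s) (Icc (0:ℝ) 1) := by
      have := intervalIntegral.continuousOn_primitive_interval
        (a := (0:ℝ)) (b := (1:ℝ)) (f := f) (by rwa [uIcc_of_le (by norm_num : (0:ℝ) ≤ 1)])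
      rwa [uIcc_of_le (by norm_num : (0:ℝ) ≤ 1)] at this
    exact (continuousOn_const.sub hprim).congr hd_split
  -- 0 ≤ ∫_0^q f, so d q ≤ d 0, and 0 ≤ d q
  have hf_nonneg : ∀ s ∈ Ioc (0:ℝ) 1, 0 ≤ f s := by
    intro s hs
    exact mul_nonneg (le_of_lt (hξ'' s hs)) (hx_mem s (Ioc_subset_Icc_self hs)).1
  have hint_nonneg : ∀ p q : ℝ, 0 ≤ p → p ≤ q → q ≤ 1 → 0 ≤ ∫ s in p..q, f s := by
    intro p q hp hpq hq1
    rw [intervalIntegral.integral_of_le hpq]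
    refine setIntegral_nonneg measurableSet_Ioc fun s hs => ?_
    exact hf_nonneg s ⟨lt_of_le_of_lt hp hs.1, hs.2.trans hq1⟩
  have hd_le : ∀ q ∈ Icc (0:ℝ) 1, dFun ξ x q ≤ dFun ξ x 0 := by
    intro q hq
    rw [hd_split q hq]
    linarith [hint_nonneg 0 q (le_refl 0) hq.1 hq.2]
  have hd0_nonneg : 0 ≤ dFun ξ x 0 := by
    have := hint_nonneg 0 1 (le_refl 0) (by norm_num) (le_refl 1)
    simpa [dFun, hf_def] using this
  -- the key denominator bound
  set ε : ℝ := (b - dFun ξ x 0) / 2 with hε_def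
  have hε : 0 < ε := by rw [hε_def]; linarith
  have hden : ∀ q ∈ Icc (0:ℝ) 1, ∀ c : ℝ, |c| ≤ ε → ε ≤ b + c - dFun ξ x q := by
    intro q hq c hc
    have h1 := hd_le q hq
    have h2 := abs_le.mp hc
    rw [hε_def] at *
    linarith [h2.1]
  -- d s = d 0 for s ∈ [0, |u|]
  have hdu : ∀ s ∈ Icc (0:ℝ) (|u|), dFun ξ x s = dFun ξ x 0 := by
    intro s hs
    have hs1 : s ∈ Icc (0:ℝ) 1 := ⟨hs.1, hs.2.trans (huux.trans hux1)⟩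
    rw [hd_split s hs1]
    have hz : ∫ r in (0:ℝ)..s, f r = 0 := by
      rw [intervalIntegral.integral_of_le hs1.1]
      have hzz : ∫ r in Ioc (0:ℝ) s, f r = ∫ r in Ioc (0:ℝ) s, (0:ℝ) := by
        refine setIntegral_congr_ae measurableSet_Ioc ?_
        have hne : ∀ᵐ r : ℝ, r ≠ ux := by
          have : (volume : Measure ℝ) {ux} = 0 := measure_singleton ux
          filter_upwards [measure_eq_zero_iff_ae_notMem.mp this] with r hr
          exact hr
        filter_upwards [hne] with r hr hrs
        have hrx : r < ux := lt_of_le_of_ne (hrs.2.trans (hs.2.trans huux)) hr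
        have : x r = 0 := hux_lower r ⟨le_of_lt hrs.1, hrx⟩
        simp [hf_def, this]
      rw [hzz]; simp
    rw [hz]; ring
  -- the FTC fact : ∫_0^{|u|} ξ'' = ξ'(|u|)
  have hFTC : ∫ s in (0:ℝ)..|u|, xi2 ξ s = deriv ξ |u| := by
    have := intervalIntegral.integral_deriv_eq_sub (f := deriv ξ) (a := (0:ℝ)) (b := |u|)
      (fun y _ => hD2 y) ((hcont2.intervalIntegrable 0 (|u|)))
    rw [show deriv (deriv ξ) = xi2 ξ from rfl] at this
    rw [this, hξ'0, sub_zero]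
  -- phi = d 0 on [0,|u|]
  have hphi : ∀ s ∈ Icc (0:ℝ) (|u|), phiFun ξ x t (|u|) s = dFun ξ x 0 := by
    intro s hs
    have h1 := hdu s hs
    have h2 := hdu (|u|) ⟨hu0, le_refl _⟩
    simp [phiFun, h1, h2]
  -- η
  set η : ℝ := if 0 ≤ u then 1 else -1 with hη_def
  have hηabs : η * η = 1 := by rw [hη_def]; split <;> norm_num
  have hηc : η * deriv ξ |u| = deriv ξ u := by
    rcases le_or_gt 0 u with h0 | h0
    · rw [hη_def, if_pos h0, abs_of_nonneg h0, one_mul]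
    · rw [hη_def, if_neg (not_le.mpr h0), abs_of_neg h0, hodd u]; ring
  -- derivative of the parameter integrals over [|u|,1]
  have key : ∀ σ : ℝ, |σ| = 1 →
      HasDerivAt (fun lam => ∫ s in (|u|)..1, xi2 ξ s / (b + σ * lam - dFun ξ x s))
        (-σ * ∫ s in (|u|)..1, xi2 ξ s / (b - dFun ξ x s) ^ 2) 0 := by
    intro σ hσ
    have hIsub : Set.uIoc (|u|) 1 ⊆ Icc (0:ℝ) 1 := by
      rw [uIoc_of_le hu1]
      exact (Ioc_subset_Icc_self).trans (Icc_subset_Icc hu0 le_rfl)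
    have hIcsub : Icc (|u|) 1 ⊆ Icc (0:ℝ) 1 := Icc_subset_Icc hu0 le_rfl
    have hcontden : ∀ lam : ℝ, |lam| < ε →
        ContinuousOn (fun s => xi2 ξ s / (b + σ * lam - dFun ξ x s)) (Icc (0:ℝ) 1) := by
      intro lam hlam
      refine hcont2.continuousOn.div ((continuousOn_const.sub hd_cont)) ?_
      intro s hs
      have := hden s hs (σ * lam) (by rw [abs_mul, hσ, one_mul]; exact le_of_lt hlam)
      intro hc
      rw [show b + σ * lam - dFun ξ x s = b + σ * lam - dFun ξ x s from rfl] at hc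
      nlinarith [hε]
    have main := intervalIntegral.hasDerivAt_integral_of_dominated_loc_of_deriv_le
      (F := fun lam s => xi2 ξ s / (b + σ * lam - dFun ξ x s))
      (F' := fun lam s => -σ * (xi2 ξ s / (b + σ * lam - dFun ξ x s) ^ 2))
      (x₀ := (0:ℝ)) (a := |u|) (b := 1) (μ := volume) (s := Metric.ball (0:ℝ) ε)
      (bound := fun _ => M / ε ^ 2) (Metric.ball_mem_nhds (0:ℝ) hε)
      ?_ ?_ ?_ ?_ ?_ ?_
    · have h2 := main.2
      have heq : (∫ s in (|u|)..1, -σ * (xi2 ξ s / (b + σ * 0 - dFun ξ x s) ^ 2))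
          = -σ * ∫ s in (|u|)..1, xi2 ξ s / (b - dFun ξ x s) ^ 2 := by
        rw [← intervalIntegral.integral_const_mul]
        simp only [mul_zero, add_zero]
      rwa [heq] at h2
    · filter_upwards [Metric.ball_mem_nhds (0:ℝ) hε] with lam hlam
      exact ((hcontden lam (by simpa [Real.dist_eq] using hlam)).mono hIsub).aestronglyMeasurable
        measurableSet_uIoc
    · exact ((hcontden 0 (by simpa using hε)).mono (by rw [uIcc_of_le hu1]; exact hIcsub)).intervalIntegrable
    · have hc : ContinuousOn (fun s => -σ * (xi2 ξ s / (b + σ * 0 - dFun ξ x s) ^ 2))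
          (Icc (0:ℝ) 1) := by
        refine continuousOn_const.mul
          (hcont2.continuousOn.div ((continuousOn_const.sub hd_cont).pow 2) ?_)
        intro s hs
        have hd1 := hden s hs (σ * 0) (by rw [abs_mul, hσ, one_mul]; simpa using le_of_lt hε)
        have hne : b + σ * 0 - dFun ξ x s ≠ 0 := by nlinarith [hε]
        exact pow_ne_zero 2 hne
      exact (hc.mono hIsub).aestronglyMeasurable measurableSet_uIoc
    · refine Filter.Eventually.of_forall fun s hs lam hlam => ?_
      have hsI : s ∈ Icc (0:ℝ) 1 := hIsub hs
      have hd1 := hden s hsI (σ * lam)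
        (by rw [abs_mul, hσ, one_mul]; exact le_of_lt (by simpa [Real.dist_eq] using hlam))
      have hpos : (0:ℝ) < b + σ * lam - dFun ξ x s := lt_of_lt_of_le hε hd1
      have hden2 : ε ^ 2 ≤ (b + σ * lam - dFun ξ x s) ^ 2 := by nlinarith
      calc ‖-σ * (xi2 ξ s / (b + σ * lam - dFun ξ x s) ^ 2)‖
          = |xi2 ξ s| / (b + σ * lam - dFun ξ x s) ^ 2 := by
            rw [norm_mul, norm_neg, Real.norm_eq_abs, hσ, one_mul, Real.norm_eq_abs,
              abs_div, abs_pow, abs_of_pos hpos]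
        _ ≤ M / ε ^ 2 := div_le_div₀ hM0 (hM s hsI) (pow_pos hε 2) hden2
    · exact intervalIntegrable_const
    · refine Filter.Eventually.of_forall fun s hs lam hlam => ?_
      have hsI : s ∈ Icc (0:ℝ) 1 := hIsub hs
      have hd1 := hden s hsI (σ * lam)
        (by rw [abs_mul, hσ, one_mul]; exact le_of_lt (by simpa [Real.dist_eq] using hlam))
      have hne : b + σ * lam - dFun ξ x s ≠ 0 := by nlinarith [hε]
      have hder : HasDerivAt (fun l : ℝ => b + σ * l - dFun ξ x s) σ lam := by
        simpa using (((hasDerivAt_id lam).const_mul σ).const_add b).sub_const (dFun ξ x s)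
      have := (hasDerivAt_const lam (xi2 ξ s)).div hder hne
      refine this.congr_deriv ?_
      ring
  -- rewrite the first two integrals explicitly
  have hint1 : ∀ lam : ℝ,
      (∫ s in (0:ℝ)..|u|, xi2 ξ s / (b - η * lam - dFun ξ x s))
        = deriv ξ |u| / (b - η * lam - dFun ξ x 0) := by
    intro lam
    rw [intervalIntegral.integral_congr
      (g := fun s => xi2 ξ s / (b - η * lam - dFun ξ x 0))
      (fun s hs => by rw [hdu s (by rwa [uIcc_of_le hu0] at hs)]),
      intervalIntegral.integral_div, hFTC]
  have hint2 : ∀ lam : ℝ,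
      (∫ s in (0:ℝ)..|u|, xi2 ξ s / (b + η * lam - phiFun ξ x t (|u|) s))
        = deriv ξ |u| / (b + η * lam - dFun ξ x 0) := by
    intro lam
    rw [intervalIntegral.integral_congr
      (g := fun s => xi2 ξ s / (b + η * lam - dFun ξ x 0))
      (fun s hs => by rw [hphi s (by rwa [uIcc_of_le hu0] at hs)]),
      intervalIntegral.integral_div, hFTC]
  -- the explicit form of GuerraP
  have hG : ∀ lam : ℝ, GuerraP ξ x t h b u lam =
      (1/2) * Real.log (b^2 / (b^2 - lam^2))
      + (1 + t) / 2 * (deriv ξ |u| / (b - η * lam - dFun ξ x 0))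
      + (1 - t) / 2 * (deriv ξ |u| / (b + η * lam - dFun ξ x 0))
      + (1/2) * (∫ s in (|u|)..1, xi2 ξ s / (b - lam - dFun ξ x s))
      + (1/2) * (∫ s in (|u|)..1, xi2 ξ s / (b + lam - dFun ξ x s))
      - lam * u + b - 1 - Real.log b - (∫ q in (0:ℝ)..1, xi2 ξ q * x q)
      + h^2 / (b - lam - dFun ξ x 0) := by
    intro lam
    rcases le_or_gt 0 u with h0 | h0
    · have hη1 : η = 1 := by rw [hη_def, if_pos h0]
      rw [GuerraP, if_pos h0, TFun]
      simp only [← hη_def]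
      rw [hint1 lam, hint2 lam, hη1]
    · have hη1 : η = -1 := by rw [hη_def, if_neg (not_le.mpr h0)]
      rw [GuerraP, if_neg (not_le.mpr h0), TFun]
      simp only [← hη_def]
      rw [hint1 lam, hint2 lam, hphi 0 ⟨le_refl _, hu0⟩, hη1]
  -- derivative building blocks
  have hbd0 : (0:ℝ) < b - dFun ξ x 0 := by linarith
  have HA : HasDerivAt (fun lam : ℝ => (1/2) * Real.log (b^2 / (b^2 - lam^2))) 0 0 := by
    have hne : b^2 - (0:ℝ)^2 ≠ 0 := by norm_num; nlinarith
    have hy : HasDerivAt (fun lam : ℝ => b^2 / (b^2 - lam^2)) 0 0 := by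
      have := (hasDerivAt_const (0:ℝ) (b^2)).div
        ((hasDerivAt_const (0:ℝ) (b^2)).sub (hasDerivAt_pow 2 (0:ℝ))) hne
      refine this.congr_deriv ?_
      norm_num
    have hne2 : b^2 / (b^2 - (0:ℝ)^2) ≠ 0 := by
      have h1 : (0:ℝ) < b^2 - 0^2 := by nlinarith
      positivity
    have := (hy.log hne2).const_mul (1/2)
    refine this.congr_deriv ?_
    norm_num
  have hden_eta : ∀ σ : ℝ, b - σ * 0 - dFun ξ x 0 ≠ 0 := by
    intro σ; have : b - σ * 0 - dFun ξ x 0 = b - dFun ξ x 0 := by ring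
    rw [this]; linarith
  have HB : HasDerivAt (fun lam : ℝ => (1 + t) / 2 * (deriv ξ |u| / (b - η * lam - dFun ξ x 0)))
      ((1 + t) / 2 * (η * deriv ξ |u| / (b - dFun ξ x 0)^2)) 0 := by
    have hden' : HasDerivAt (fun lam : ℝ => b - η * lam - dFun ξ x 0) (0 - η * 1) 0 :=
      ((hasDerivAt_const (0:ℝ) b).sub ((hasDerivAt_id (0:ℝ)).const_mul η)).sub_const _
    have hne : b - η * 0 - dFun ξ x 0 ≠ 0 := hden_eta η
    have := ((hasDerivAt_const (0:ℝ) (deriv ξ |u|)).div hden' hne).const_mul ((1 + t)/2)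
    refine this.congr_deriv ?_
    ring
  have HC : HasDerivAt (fun lam : ℝ => (1 - t) / 2 * (deriv ξ |u| / (b + η * lam - dFun ξ x 0)))
      ((1 - t) / 2 * (-(η * deriv ξ |u|) / (b - dFun ξ x 0)^2)) 0 := by
    have hden' : HasDerivAt (fun lam : ℝ => b + η * lam - dFun ξ x 0) (η * 1) 0 :=
      (((hasDerivAt_id (0:ℝ)).const_mul η).const_add b).sub_const _
    have hne : b + η * 0 - dFun ξ x 0 ≠ 0 := by
      have : b + η * 0 - dFun ξ x 0 = b - dFun ξ x 0 := by ring
      rw [this]; linarith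
    have := ((hasDerivAt_const (0:ℝ) (deriv ξ |u|)).div hden' hne).const_mul ((1 - t)/2)
    refine this.congr_deriv ?_
    ring
  have HD : HasDerivAt
      (fun lam : ℝ => (1/2) * (∫ s in (|u|)..1, xi2 ξ s / (b - lam - dFun ξ x s)))
      ((1/2) * (∫ s in (|u|)..1, xi2 ξ s / (b - dFun ξ x s)^2)) 0 := by
    have := (key (-1) (by norm_num)).const_mul (1/2)
    simp only [neg_one_mul, ← sub_eq_add_neg, neg_neg, one_mul] at this
    convert this using 2
  have HE : HasDerivAt
      (fun lam : ℝ => (1/2) * (∫ s in (|u|)..1, xi2 ξ s / (b + lam - dFun ξ x s)))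
      ((1/2) * (-(∫ s in (|u|)..1, xi2 ξ s / (b - dFun ξ x s)^2))) 0 := by
    have := (key 1 (by norm_num)).const_mul (1/2)
    simp only [one_mul, neg_one_mul] at this
    convert this using 2
  have Hu : HasDerivAt (fun lam : ℝ => lam * u) u 0 := by
    simpa using (hasDerivAt_id (0:ℝ)).mul_const u
  have HH : HasDerivAt (fun lam : ℝ => h^2 / (b - lam - dFun ξ x 0))
      (h^2 / (b - dFun ξ x 0)^2) 0 := by
    have hden' : HasDerivAt (fun lam : ℝ => b - lam - dFun ξ x 0) (0 - 1) 0 :=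
      ((hasDerivAt_const (0:ℝ) b).sub (hasDerivAt_id (0:ℝ))).sub_const _
    have hne : b - 0 - dFun ξ x 0 ≠ 0 := by
      have : b - 0 - dFun ξ x 0 = b - dFun ξ x 0 := by ring
      rw [this]; linarith
    have := (hasDerivAt_const (0:ℝ) (h^2)).div hden' hne
    refine this.congr_deriv ?_
    ring
  have Htot := (((((((((HA.add HB).add HC).add HD).add HE).sub Hu).add_const b).sub_const
    1).sub_const (Real.log b)).sub_const (∫ q in (0:ℝ)..1, xi2 ξ q * x q)).add HH
  have Htot' : HasDerivAt (fun lam : ℝ =>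
      (1/2) * Real.log (b^2 / (b^2 - lam^2))
      + (1 + t) / 2 * (deriv ξ |u| / (b - η * lam - dFun ξ x 0))
      + (1 - t) / 2 * (deriv ξ |u| / (b + η * lam - dFun ξ x 0))
      + (1/2) * (∫ s in (|u|)..1, xi2 ξ s / (b - lam - dFun ξ x s))
      + (1/2) * (∫ s in (|u|)..1, xi2 ξ s / (b + lam - dFun ξ x s))
      - lam * u + b - 1 - Real.log b - (∫ q in (0:ℝ)..1, xi2 ξ q * x q)
      + h^2 / (b - lam - dFun ξ x 0))
      ((h ^ 2 + t * deriv ξ u) / (b - dFun ξ x 0) ^ 2 - u) 0 := by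
    refine Htot.congr_deriv ?_
    rw [← hηc]
    ring
  exact Htot'.congr_of_eventuallyEq (Filter.Eventually.of_forall hG)
end

section
/- There exist δ > 0 with δ < b − d(0) and a constant L > 0 such that for every u ∈ [−u_x, u_x] and every λ ∈ (−δ, δ), the function λ ↦ 𝒫_u(x,b,λ) is twice differentiable at λ and its second derivative satisfies |∂²_λ 𝒫_u(x,b,λ)| ≤ L, where L is independent of λ and of u. -/
open MeasureTheory Real Set

set_option maxHeartbeats 2000000 in
/-- Uniform bound on the second derivative of `λ ↦ 𝒫_u(x,b,λ)` near `λ = 0`,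
uniformly in `u ∈ [-u_x, u_x]`. -/
theorem guerra_second_deriv_bound
    (ξ x : ℝ → ℝ) (h t b ux : ℝ)
    (hξ_even : ∀ s, ξ (-s) = ξ s)
    (hξ_smooth : ContDiff ℝ 3 ξ)
    (hξ'' : ∀ s ∈ Set.Ioc (0:ℝ) 1, 0 < xi2 ξ s)
    (hξ''' : ∀ s ∈ Set.Icc (0:ℝ) 1, 0 ≤ deriv (xi2 ξ) s)
    (hx_mono : MonotoneOn x (Set.Icc 0 1))
    (hx_mem : ∀ q ∈ Set.Icc (0:ℝ) 1, x q ∈ Set.Icc (0:ℝ) 1)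
    (hx_rc : ∀ q ∈ Set.Ico (0:ℝ) 1, ContinuousWithinAt x (Set.Ici q) q)
    (hx_one : x 1 = 1)
    (hux_mem : ux ∈ Set.Icc (0:ℝ) 1)
    (hux_lower : ∀ q ∈ Set.Ico (0:ℝ) ux, x q = 0)
    (hux_upper : ∀ q ∈ Set.Ioc ux 1, 0 < x q)
    (ht : t ∈ Set.Ioo (0:ℝ) 1)
    (hb : max 1 (∫ s in (0:ℝ)..1, xi2 ξ s * x s) < b) :
    ∃ δ L : ℝ, 0 < δ ∧ δ < b - dFun ξ x 0 ∧ 0 < L ∧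
      ∀ u ∈ Set.Icc (-ux) ux, ∀ lam ∈ Set.Ioo (-δ) δ,
        DifferentiableAt ℝ (fun l => GuerraP ξ x t h b u l) lam ∧
        DifferentiableAt ℝ (deriv (fun l => GuerraP ξ x t h b u l)) lam ∧
        |deriv (deriv (fun l => GuerraP ξ x t h b u l)) lam| ≤ L := by
  -- notation
  have hb1 : (1:ℝ) < b := lt_of_le_of_lt (le_max_left _ _) hb
  have hxi2cont : Continuous (xi2 ξ) := by
    have h3 : ContDiff ℝ (2+1) ξ := hξ_smooth
    have h2 : ContDiff ℝ 2 (deriv ξ) := (contDiff_succ_iff_deriv.mp h3).2.2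
    have h2' : ContDiff ℝ (1+1) (deriv ξ) := h2
    have h1 : ContDiff ℝ 1 (deriv (deriv ξ)) := (contDiff_succ_iff_deriv.mp h2').2.2
    exact h1.continuous
  have hxi2nonneg : ∀ s ∈ Icc (0:ℝ) 1, 0 ≤ xi2 ξ s := by
    intro s hs
    rcases eq_or_lt_of_le hs.1 with hs0 | hs0
    · -- s = 0 : by continuity from the right
      subst hs0
      have htd : Filter.Tendsto (xi2 ξ) (nhdsWithin 0 (Ioi 0)) (nhds (xi2 ξ 0)) :=
        (hxi2cont.continuousAt).continuousWithinAt
      refine ge_of_tendsto htd ?_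
      filter_upwards [Ioo_mem_nhdsGT_of_mem (by constructor <;> norm_num : (0:ℝ) ∈ Ico 0 1)] with
        q hq
      exact (hξ'' q ⟨hq.1, le_of_lt hq.2⟩).le
    · exact (hξ'' s ⟨hs0, hs.2⟩).le
  set d0 : ℝ := dFun ξ x 0 with hd0def
  have hd0int : dFun ξ x 0 = ∫ s in (0:ℝ)..1, xi2 ξ s * x s := rfl
  have hd0b : d0 < b := by rw [hd0def, hd0int]; exact lt_of_le_of_lt (le_max_right _ _) hb
  -- integrability of the integrand of d
  have hx_mono' : MonotoneOn x (uIcc (0:ℝ) 1) := by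
    rwa [uIcc_of_le (zero_le_one' ℝ)]
  have hg_int : IntervalIntegrable (fun s => xi2 ξ s * x s) volume 0 1 :=
    hx_mono'.intervalIntegrable.continuousOn_mul hxi2cont.continuousOn
  have hg_sub : ∀ c d' : ℝ, c ∈ Icc (0:ℝ) 1 → d' ∈ Icc (0:ℝ) 1 →
      IntervalIntegrable (fun s => xi2 ξ s * x s) volume c d' := by
    intro c d' hc hd'
    refine hg_int.mono_set ?_
    rw [uIcc_of_le (zero_le_one' ℝ)]
    exact uIcc_subset_Icc hc hd'
  have hg_nonneg : ∀ q ∈ Icc (0:ℝ) 1, 0 ≤ xi2 ξ q * x q := fun q hq =>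
    mul_nonneg (hxi2nonneg q hq) (hx_mem q hq).1
  -- d splits
  have hd_split : ∀ s ∈ Icc (0:ℝ) 1,
      (∫ q in (0:ℝ)..s, xi2 ξ q * x q) + dFun ξ x s = d0 := by
    intro s hs
    rw [hd0def, hd0int]
    exact intervalIntegral.integral_add_adjacent_intervals
      (hg_sub 0 s (by simp) hs) (hg_sub s 1 hs (by simp))
  -- d is constant d0 on [0, ux]
  have hd_eq : ∀ s ∈ Icc (0:ℝ) ux, dFun ξ x s = d0 := by
    intro s hs
    have hs1 : s ∈ Icc (0:ℝ) 1 := ⟨hs.1, le_trans hs.2 hux_mem.2⟩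
    have hzero : (∫ q in (0:ℝ)..s, xi2 ξ q * x q) = 0 := by
      have hae : ∀ᵐ q : ℝ ∂volume, q ≠ ux := by
        rw [MeasureTheory.ae_iff]
        simpa using measure_singleton (μ := (volume : Measure ℝ)) ux
      rw [intervalIntegral.integral_congr_ae (g := fun _ => (0:ℝ)) ?_,
        intervalIntegral.integral_zero]
      filter_upwards [hae] with q hq hq2
      rw [uIoc_of_le hs.1] at hq2
      have : x q = 0 := hux_lower q ⟨le_of_lt hq2.1, lt_of_le_of_ne (le_trans hq2.2 hs.2) hq⟩
      rw [this, mul_zero]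
    have := hd_split s hs1
    linarith
  -- d ≤ d0 on [0,1]
  have hd_le : ∀ s ∈ Icc (0:ℝ) 1, dFun ξ x s ≤ d0 := by
    intro s hs
    have h0 : 0 ≤ ∫ q in (0:ℝ)..s, xi2 ξ q * x q := by
      refine intervalIntegral.integral_nonneg hs.1 ?_
      intro q hq
      exact hg_nonneg q ⟨hq.1, le_trans hq.2 hs.2⟩
    have := hd_split s hs
    linarith
  have hd0nonneg : 0 ≤ d0 := by
    rw [hd0def, hd0int]
    exact intervalIntegral.integral_nonneg (zero_le_one' ℝ) hg_nonneg
  -- continuity of d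
  have hd_cont : ContinuousOn (dFun ξ x) (Icc (0:ℝ) 1) := by
    have hInt : IntegrableOn (fun s => xi2 ξ s * x s) (uIcc (0:ℝ) 1) volume := by
      rw [uIcc_of_le (zero_le_one' ℝ)]
      exact (intervalIntegrable_iff_integrableOn_Icc_of_le (zero_le_one' ℝ)).mp hg_int
    have := intervalIntegral.continuousOn_primitive_interval_left (a := (0:ℝ)) (b := (1:ℝ)) (μ := volume) hInt
    rwa [uIcc_of_le (zero_le_one' ℝ)] at this
  -- delta
  set δ : ℝ := (b - d0) / 2 with hδdef
  have hδpos : 0 < δ := by rw [hδdef]; linarith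
  have hδlt : δ < b - d0 := by rw [hδdef]; linarith
  -- denominator bounds
  have hden : ∀ lam : ℝ, |lam| ≤ δ → ∀ s ∈ Icc (0:ℝ) 1, δ ≤ b - lam - dFun ξ x s := by
    intro lam hlam s hs
    have h1 : lam ≤ δ := le_trans (le_abs_self lam) hlam
    have h2 := hd_le s hs
    rw [hδdef] at *
    linarith
  have hden0 : ∀ lam : ℝ, |lam| ≤ δ → δ ≤ b - lam - d0 := by
    intro lam hlam
    have := hden lam hlam 0 (by constructor <;> norm_num)
    rwa [← hd0def] at this
  -- continuity of the integrands on [0,1]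
  have hcontI : ∀ (lam : ℝ), |lam| ≤ δ → ∀ k : ℕ,
      ContinuousOn (fun s => xi2 ξ s / (b - lam - dFun ξ x s) ^ k) (Icc (0:ℝ) 1) := by
    intro lam hlam k
    refine hxi2cont.continuousOn.div (((continuousOn_const.sub hd_cont)).pow k) ?_
    intro s hs
    exact pow_ne_zero _ (ne_of_gt (lt_of_lt_of_le hδpos (hden lam hlam s hs)))
  have hintI : ∀ (lam : ℝ), |lam| ≤ δ → ∀ k : ℕ, ∀ c d' : ℝ, c ∈ Icc (0:ℝ) 1 → d' ∈ Icc (0:ℝ) 1 →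
      IntervalIntegrable (fun s => xi2 ξ s / (b - lam - dFun ξ x s) ^ k) volume c d' := by
    intro lam hlam k c d' hc hd'
    refine ((hcontI lam hlam k).mono ?_).intervalIntegrable
    exact uIcc_subset_Icc hc hd'
  -- the key parametric integral and its derivative
  set G : ℕ → ℝ → ℝ :=
    fun k lam => ∫ s in (0:ℝ)..1, xi2 ξ s / (b - lam - dFun ξ x s) ^ k with hGdef
  have hGder : ∀ m : ℕ, ∀ lam₀ ∈ Ioo (-δ) δ,
      HasDerivAt (G (m+1)) (((m:ℝ)+1) * G (m+2) lam₀) lam₀ := by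
    intro m lam₀ hlam₀
    have hlam₀' : |lam₀| < δ := abs_lt.mpr ⟨hlam₀.1, hlam₀.2⟩
    set ε : ℝ := δ - |lam₀| with hεdef
    have hε : 0 < ε := by rw [hεdef]; linarith
    have hball : ∀ lam ∈ Metric.ball lam₀ ε, |lam| ≤ δ := by
      intro lam hlam
      rw [Metric.mem_ball, Real.dist_eq] at hlam
      have := abs_sub_abs_le_abs_sub lam lam₀
      rw [hεdef] at hlam; linarith
    have hmeas : ∀ lam : ℝ, |lam| ≤ δ → ∀ k : ℕ, AEStronglyMeasurable
        (fun s => xi2 ξ s / (b - lam - dFun ξ x s) ^ k) (volume.restrict (Set.uIoc (0:ℝ) 1)) := by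
      intro lam hlam k
      refine ((hcontI lam hlam k).aestronglyMeasurable measurableSet_Icc).mono_measure
        (Measure.restrict_mono ?_ le_rfl)
      rw [uIoc_of_le (zero_le_one' ℝ)]
      exact Ioc_subset_Icc_self
    have hF_meas : ∀ᶠ lam in nhds lam₀, AEStronglyMeasurable
        (fun s => xi2 ξ s / (b - lam - dFun ξ x s) ^ (m+1)) (volume.restrict (Set.uIoc (0:ℝ) 1)) := by
      filter_upwards [Metric.ball_mem_nhds lam₀ hε] with lam hlam
      exact hmeas lam (hball lam hlam) (m+1)
    have hF_int : IntervalIntegrable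
        (fun s => xi2 ξ s / (b - lam₀ - dFun ξ x s) ^ (m+1)) volume 0 1 :=
      hintI lam₀ hlam₀'.le (m+1) 0 1 (by simp) (by simp)
    have hF'_meas : AEStronglyMeasurable
        (fun s => ((m:ℝ)+1) * xi2 ξ s / (b - lam₀ - dFun ξ x s) ^ (m+2))
        (volume.restrict (Set.uIoc (0:ℝ) 1)) := by
      simp only [mul_div_assoc]
      exact (hmeas lam₀ hlam₀'.le (m+2)).const_mul _
    have h_bound : ∀ᵐ s ∂volume, s ∈ Set.uIoc (0:ℝ) 1 → ∀ lam ∈ Metric.ball lam₀ ε,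
        ‖((m:ℝ)+1) * xi2 ξ s / (b - lam - dFun ξ x s) ^ (m+2)‖
          ≤ ((m:ℝ)+1) * xi2 ξ s / δ ^ (m+2) := by
      refine Filter.Eventually.of_forall ?_
      intro s hs lam hlam
      rw [uIoc_of_le (zero_le_one' ℝ)] at hs
      have hsIcc : s ∈ Icc (0:ℝ) 1 := Ioc_subset_Icc_self hs
      have hxi : 0 ≤ xi2 ξ s := hxi2nonneg s hsIcc
      have hdlow := hden lam (hball lam hlam) s hsIcc
      have hdpos : 0 < b - lam - dFun ξ x s := lt_of_lt_of_le hδpos hdlow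
      have hnum : (0:ℝ) ≤ ((m:ℝ)+1) * xi2 ξ s := by positivity
      rw [Real.norm_eq_abs, abs_of_nonneg (by positivity)]
      gcongr
    have hbound_int : IntervalIntegrable
        (fun s => ((m:ℝ)+1) * xi2 ξ s / δ ^ (m+2)) volume 0 1 :=
      ((continuous_const.mul hxi2cont).div_const _).intervalIntegrable _ _
    have h_diff : ∀ᵐ s ∂volume, s ∈ Set.uIoc (0:ℝ) 1 → ∀ lam ∈ Metric.ball lam₀ ε,
        HasDerivAt (fun lam => xi2 ξ s / (b - lam - dFun ξ x s) ^ (m+1))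
          (((m:ℝ)+1) * xi2 ξ s / (b - lam - dFun ξ x s) ^ (m+2)) lam := by
      refine Filter.Eventually.of_forall ?_
      intro s hs lam hlam
      rw [uIoc_of_le (zero_le_one' ℝ)] at hs
      have hsIcc : s ∈ Icc (0:ℝ) 1 := Ioc_subset_Icc_self hs
      have hdlow := hden lam (hball lam hlam) s hsIcc
      have hdpos : 0 < b - lam - dFun ξ x s := lt_of_lt_of_le hδpos hdlow
      have hden' : HasDerivAt (fun lam : ℝ => b - lam - dFun ξ x s) (-1) lam :=
        ((hasDerivAt_id lam).const_sub b).sub_const _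
      have hpow := hden'.pow (m+1)
      have hinv := hpow.inv (pow_ne_zero _ (ne_of_gt hdpos))
      have hmul := hinv.const_mul (xi2 ξ s)
      simp only [Nat.add_sub_cancel] at hmul
      have hne : (b - lam - dFun ξ x s) ≠ 0 := ne_of_gt hdpos
      have hpm : (b - lam - dFun ξ x s) ^ m ≠ 0 := pow_ne_zero _ hne
      have hpm2 : (b - lam - dFun ξ x s) ^ (m+2) ≠ 0 := pow_ne_zero _ hne
      have hval : xi2 ξ s * (-((↑(m+1) : ℝ) * (b - lam - dFun ξ x s) ^ m * (-1))
            / ((b - lam - dFun ξ x s) ^ (m+1)) ^ 2)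
          = ((m:ℝ)+1) * xi2 ξ s / (b - lam - dFun ξ x s) ^ (m+2) := by
        have hpp : ((b - lam - dFun ξ x s) ^ (m+1)) ^ 2
            = (b - lam - dFun ξ x s) ^ m * (b - lam - dFun ξ x s) ^ (m+2) := by
          rw [← pow_mul, ← pow_add]
          congr 1
          ring
        rw [hpp, mul_neg_one, neg_neg, mul_div_assoc']
        rw [div_eq_div_iff (by exact mul_ne_zero hpm hpm2) hpm2]
        push_cast
        ring
      rw [← hval]
      exact hmul
    have key := intervalIntegral.hasDerivAt_integral_of_dominated_loc_of_deriv_le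
      (𝕜 := ℝ) (μ := volume) (a := 0) (b := 1) (x₀ := lam₀)
      (F := fun lam s => xi2 ξ s / (b - lam - dFun ξ x s) ^ (m+1))
      (F' := fun lam s => ((m:ℝ)+1) * xi2 ξ s / (b - lam - dFun ξ x s) ^ (m+2))
      (bound := fun s => ((m:ℝ)+1) * xi2 ξ s / δ ^ (m+2))
      (Metric.ball_mem_nhds lam₀ hε) hF_meas hF_int hF'_meas h_bound hbound_int h_diff
    have h2 := key.2
    have heq : (∫ s in (0:ℝ)..1, ((m:ℝ)+1) * xi2 ξ s / (b - lam₀ - dFun ξ x s) ^ (m+2))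
        = ((m:ℝ)+1) * G (m+2) lam₀ := by
      rw [hGdef]
      simp only [mul_div_assoc]
      rw [intervalIntegral.integral_const_mul]
    rw [heq] at h2
    exact h2
  -- bound on G 3
  have hA1 : (0:ℝ) ≤ ∫ s in (0:ℝ)..1, xi2 ξ s :=
    intervalIntegral.integral_nonneg (zero_le_one' ℝ) hxi2nonneg
  set A1 : ℝ := ∫ s in (0:ℝ)..1, xi2 ξ s with hA1def
  have hG3bound : ∀ lam : ℝ, |lam| ≤ δ → |G 3 lam| ≤ A1 / δ ^ 3 := by
    intro lam hlam
    have h1 : |G 3 lam| ≤ ∫ s in (0:ℝ)..1, |xi2 ξ s / (b - lam - dFun ξ x s) ^ 3| := by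
      rw [hGdef]
      exact intervalIntegral.abs_integral_le_integral_abs (zero_le_one' ℝ)
    have h2 : (∫ s in (0:ℝ)..1, |xi2 ξ s / (b - lam - dFun ξ x s) ^ 3|)
        ≤ ∫ s in (0:ℝ)..1, xi2 ξ s / δ ^ 3 := by
      refine intervalIntegral.integral_mono_on (zero_le_one' ℝ)
        (hintI lam hlam 3 0 1 (by simp) (by simp)).abs
        ((hxi2cont.div_const _).intervalIntegrable _ _) ?_
      intro s hs
      have hdlow := hden lam hlam s hs
      have hdpos : 0 < b - lam - dFun ξ x s := lt_of_lt_of_le hδpos hdlow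
      have hxi : 0 ≤ xi2 ξ s := hxi2nonneg s hs
      rw [abs_of_nonneg (div_nonneg hxi (le_of_lt (pow_pos hdpos 3)))]
      gcongr
    have h3 : (∫ s in (0:ℝ)..1, xi2 ξ s / δ ^ 3) = A1 / δ ^ 3 := by
      rw [hA1def, intervalIntegral.integral_div]
    linarith
  -- positivity of shifted denominators
  have hpos4 : ∀ l : ℝ, |l| ≤ δ → 0 < b - l - d0 :=
    fun l hl => lt_of_lt_of_le hδpos (hden0 l hl)
  have hpos4' : ∀ l : ℝ, |l| ≤ δ → 0 < b + l - d0 := by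
    intro l hl
    have := hpos4 (-l) (by rwa [abs_neg])
    linarith
  -- the answer
  refine ⟨δ, 1/δ^2 + 2/δ^2 + 2*A1/δ^3 + 2*A1/δ^3 + (A1/δ^3 + A1/δ^3) + (A1/δ^3 + A1/δ^3)
      + 2*h^2/δ^3 + 1, hδpos, hδlt, by positivity, ?_⟩
  intro u hu lam₀ hlam₀
  have hux1 : ux ≤ 1 := hux_mem.2
  have habs : |u| ≤ ux := abs_le.mpr ⟨hu.1, hu.2⟩
  have habs1 : |u| ≤ 1 := le_trans habs hux1
  have habs0 : (0:ℝ) ≤ |u| := abs_nonneg u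
  have hmemIcc : |u| ∈ Icc (0:ℝ) 1 := ⟨habs0, habs1⟩
  set e : ℝ := if 0 ≤ u then 1 else -1 with hedef
  have hee : e * e = 1 := by rw [hedef]; split <;> norm_num
  have heabs : ∀ l : ℝ, |e * l| = |l| := by
    intro l; rw [abs_mul, hedef]; split <;> simp
  set Au : ℝ := ∫ s in (0:ℝ)..|u|, xi2 ξ s with hAudef
  have hAu0 : 0 ≤ Au :=
    intervalIntegral.integral_nonneg habs0
      (fun q hq => hxi2nonneg q ⟨hq.1, le_trans hq.2 habs1⟩)
  have hAuA1 : Au ≤ A1 := by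
    have hsplit : Au + (∫ s in |u|..1, xi2 ξ s) = A1 := by
      rw [hAudef, hA1def]
      exact intervalIntegral.integral_add_adjacent_intervals
        (hxi2cont.intervalIntegrable _ _) (hxi2cont.intervalIntegrable _ _)
    have hpos : 0 ≤ ∫ s in |u|..1, xi2 ξ s :=
      intervalIntegral.integral_nonneg habs1
        (fun q hq => hxi2nonneg q ⟨le_trans habs0 hq.1, hq.2⟩)
    linarith
  -- closed forms for the integrals over [0,|u|]
  have hI1 : ∀ μ : ℝ, |μ| ≤ δ →
      (∫ s in (0:ℝ)..|u|, xi2 ξ s / (b - μ - dFun ξ x s)) = Au / (b - μ - d0) := by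
    intro μ hμ
    rw [intervalIntegral.integral_congr (g := fun s => xi2 ξ s / (b - μ - d0)) ?_]
    · rw [hAudef, intervalIntegral.integral_div]
    · intro s hs
      rw [uIcc_of_le habs0] at hs
      simp only [hd_eq s ⟨hs.1, le_trans hs.2 habs⟩]
  have hIphi : ∀ μ : ℝ, |μ| ≤ δ →
      (∫ s in (0:ℝ)..|u|, xi2 ξ s / (b + μ - phiFun ξ x t |u| s)) = Au / (b + μ - d0) := by
    intro μ hμ
    rw [intervalIntegral.integral_congr (g := fun s => xi2 ξ s / (b + μ - d0)) ?_]
    · rw [hAudef, intervalIntegral.integral_div]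
    · intro s hs
      rw [uIcc_of_le habs0] at hs
      have h1 : dFun ξ x s = d0 := hd_eq s ⟨hs.1, le_trans hs.2 habs⟩
      have h2 : dFun ξ x |u| = d0 := hd_eq |u| ⟨habs0, habs⟩
      simp [phiFun, h1, h2]
  have hint1 : ∀ μ : ℝ, |μ| ≤ δ → ∀ c d' : ℝ, c ∈ Icc (0:ℝ) 1 → d' ∈ Icc (0:ℝ) 1 →
      IntervalIntegrable (fun s => xi2 ξ s / (b - μ - dFun ξ x s)) volume c d' := by
    intro μ hμ c d' hc hd'
    have := hintI μ hμ 1 c d' hc hd'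
    simpa [pow_one] using this
  have hIsplit : ∀ μ : ℝ, |μ| ≤ δ →
      (∫ s in |u|..(1:ℝ), xi2 ξ s / (b - μ - dFun ξ x s)) = G 1 μ - Au / (b - μ - d0) := by
    intro μ hμ
    have hadj := intervalIntegral.integral_add_adjacent_intervals
      (hint1 μ hμ 0 |u| (by simp) hmemIcc) (hint1 μ hμ |u| 1 hmemIcc (by simp))
    have hG1 : G 1 μ = ∫ s in (0:ℝ)..1, xi2 ξ s / (b - μ - dFun ξ x s) := by
      rw [hGdef]; simp [pow_one]
    rw [hI1 μ hμ] at hadj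
    rw [hG1]
    linarith
  have hIsplit' : ∀ μ : ℝ, |μ| ≤ δ →
      (∫ s in |u|..(1:ℝ), xi2 ξ s / (b + μ - dFun ξ x s)) = G 1 (-μ) - Au / (b + μ - d0) := by
    intro μ hμ
    have := hIsplit (-μ) (by rwa [abs_neg])
    simpa [sub_neg_eq_add] using this
  -- the explicit local expressions
  set Φ : ℝ → ℝ := fun l =>
    (1/2) * (Real.log (b^2) - Real.log (b^2 - l^2))
      + (1+t)/2 * (Au / (b - e*l - d0))
      + (1-t)/2 * (Au / (b + e*l - d0))
      + (1/2) * (G 1 l - Au / (b - l - d0))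
      + (1/2) * (G 1 (-l) - Au / (b + l - d0))
      - l*u + b - 1 - Real.log b - d0
      + h^2 / (b - l - d0) with hΦdef
  set Φ1 : ℝ → ℝ := fun l =>
    l/(b^2 - l^2)
      + (1+t)/2 * (Au * e / (b - e*l - d0)^2)
      + (-((1-t)/2 * (Au * e / (b + e*l - d0)^2)))
      + (1/2) * (G 2 l - Au / (b - l - d0)^2)
      + (1/2) * (-(G 2 (-l)) + Au / (b + l - d0)^2)
      - u
      + h^2 / (b - l - d0)^2 with hΦ1def
  set Φ2 : ℝ → ℝ := fun l =>
    (1/(b^2 - l^2) + 2*l^2/(b^2 - l^2)^2)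
      + (1+t)/2 * (2*Au*(e*e) / (b - e*l - d0)^3)
      + (1-t)/2 * (2*Au*(e*e) / (b + e*l - d0)^3)
      + (1/2) * (2*G 3 l - 2*Au / (b - l - d0)^3)
      + (1/2) * (2*G 3 (-l) - 2*Au / (b + l - d0)^3)
      + 2*h^2 / (b - l - d0)^3 with hΦ2def
  -- GuerraP coincides with Φ on the interval
  have hEq : ∀ l ∈ Ioo (-δ) δ, GuerraP ξ x t h b u l = Φ l := by
    intro l hl
    have hl' : |l| ≤ δ := (abs_lt.mpr ⟨hl.1, hl.2⟩).le
    have hel : |e * l| ≤ δ := by rw [heabs]; exact hl'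
    have hphi0 : phiFun ξ x t |u| 0 = d0 := by
      have h2 : dFun ξ x |u| = d0 := hd_eq |u| ⟨habs0, habs⟩
      have h3 : dFun ξ x 0 = d0 := hd_eq 0 ⟨le_refl 0, hux_mem.1⟩
      simp [phiFun, h2, h3]
    have hbl : 0 < b - l - d0 := hpos4 l hl'
    have hbl' : 0 < b + l - d0 := hpos4' l hl'
    have hb2 : 0 < b^2 - l^2 := by
      have h1 : 0 < b - l := by have := hpos4 l hl'; linarith [hd0nonneg]
      have h2 : 0 < b + l := by have := hpos4' l hl'; linarith [hd0nonneg]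
      have heq : b^2 - l^2 = (b - l) * (b + l) := by ring
      rw [heq]; exact mul_pos h1 h2
    have hlog : Real.log (b^2/(b^2 - l^2)) = Real.log (b^2) - Real.log (b^2 - l^2) :=
      Real.log_div (by positivity) (ne_of_gt hb2)
    simp only [GuerraP, TFun]
    rw [← hedef]
    rw [hI1 (e*l) hel, hIphi (e*l) hel, hIsplit l hl', hIsplit' l hl', hlog, hphi0,
      ← hd0int, ← hd0def, hΦdef]
    by_cases hu0 : 0 ≤ u
    · rw [if_pos hu0]
    · rw [if_neg hu0]
  -- first derivative of Φ on the interval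
  have hder1 : ∀ l ∈ Ioo (-δ) δ, HasDerivAt Φ (Φ1 l) l := by
    intro l hl
    have hl' : |l| ≤ δ := (abs_lt.mpr ⟨hl.1, hl.2⟩).le
    have hel : |e * l| ≤ δ := by rw [heabs]; exact hl'
    have hbl : 0 < b - l - d0 := hpos4 l hl'
    have hbl' : 0 < b + l - d0 := hpos4' l hl'
    have hbe : 0 < b - e*l - d0 := hpos4 (e*l) hel
    have hbe' : 0 < b + e*l - d0 := hpos4' (e*l) hel
    have hb2 : 0 < b^2 - l^2 := by
      have h1 : 0 < b - l := by have := hpos4 l hl'; linarith [hd0nonneg]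
      have h2 : 0 < b + l := by have := hpos4' l hl'; linarith [hd0nonneg]
      have heq : b^2 - l^2 = (b - l) * (b + l) := by ring
      rw [heq]; exact mul_pos h1 h2
    have n1 : b - e*l - d0 ≠ 0 := ne_of_gt hbe
    have n2 : b + e*l - d0 ≠ 0 := ne_of_gt hbe'
    have n3 : b - l - d0 ≠ 0 := ne_of_gt hbl
    have n4 : b + l - d0 ≠ 0 := ne_of_gt hbl'
    have hT1 : HasDerivAt (fun l : ℝ => (1/2) * (Real.log (b^2) - Real.log (b^2 - l^2)))
        (l/(b^2 - l^2)) l := by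
      have h0 : HasDerivAt (fun l : ℝ => b^2 - l^2) (-(2*l)) l := by
        simpa using (hasDerivAt_pow 2 l).const_sub (b^2)
      have h1 := ((h0.log (ne_of_gt hb2)).const_sub (Real.log (b^2))).const_mul (1/2 : ℝ)
      refine h1.congr_deriv ?_
      field_simp
      all_goals ring
    have hdenm : HasDerivAt (fun l : ℝ => b - e*l - d0) (-e) l := by
      simpa using (((hasDerivAt_id l).const_mul e).const_sub b).sub_const d0
    have hdenp : HasDerivAt (fun l : ℝ => b + e*l - d0) e l := by
      simpa using (((hasDerivAt_id l).const_mul e).const_add b).sub_const d0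
    have hdennl : HasDerivAt (fun l : ℝ => b - l - d0) (-1) l :=
      ((hasDerivAt_id l).const_sub b).sub_const d0
    have hdenpl : HasDerivAt (fun l : ℝ => b + l - d0) 1 l :=
      ((hasDerivAt_id l).const_add b).sub_const d0
    have hT2 : HasDerivAt (fun l : ℝ => (1+t)/2 * (Au / (b - e*l - d0)))
        ((1+t)/2 * (Au * e / (b - e*l - d0)^2)) l := by
      have h1 := ((hasDerivAt_const l Au).div hdenm n1).const_mul ((1+t)/2 : ℝ)
      refine h1.congr_deriv ?_
      field_simp
      all_goals ring
    have hT3 : HasDerivAt (fun l : ℝ => (1-t)/2 * (Au / (b + e*l - d0)))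
        (-((1-t)/2 * (Au * e / (b + e*l - d0)^2))) l := by
      have h1 := ((hasDerivAt_const l Au).div hdenp n2).const_mul ((1-t)/2 : ℝ)
      refine h1.congr_deriv ?_
      field_simp
      all_goals ring
    have hT4 : HasDerivAt (fun l : ℝ => (1/2) * (G 1 l - Au / (b - l - d0)))
        ((1/2) * (G 2 l - Au / (b - l - d0)^2)) l := by
      have hG1 : HasDerivAt (G 1) (G 2 l) l := by simpa using hGder 0 l hl
      have h1 := (hG1.sub ((hasDerivAt_const l Au).div hdennl n3)).const_mul (1/2 : ℝ)
      refine h1.congr_deriv ?_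
      field_simp
      all_goals ring
    have hT5 : HasDerivAt (fun l : ℝ => (1/2) * (G 1 (-l) - Au / (b + l - d0)))
        ((1/2) * (-(G 2 (-l)) + Au / (b + l - d0)^2)) l := by
      have hneg : -l ∈ Ioo (-δ) δ := ⟨by linarith [hl.2], by linarith [hl.1]⟩
      have hnegD : HasDerivAt (fun y : ℝ => -y) (-1 : ℝ) l := by
        simpa using (hasDerivAt_neg l)
      have hG1n : HasDerivAt (fun y : ℝ => G 1 (-y)) (G 2 (-l) * (-1)) l := by
        have h0 : HasDerivAt (G 1) (G 2 (-l)) (-l) := by simpa using hGder 0 (-l) hneg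
        exact h0.comp l hnegD
      have h1 := (hG1n.sub ((hasDerivAt_const l Au).div hdenpl n4)).const_mul (1/2 : ℝ)
      refine h1.congr_deriv ?_
      field_simp
      all_goals ring
    have hlu : HasDerivAt (fun y : ℝ => y * u) u l := by
      simpa using (hasDerivAt_id l).mul_const u
    have hH : HasDerivAt (fun l : ℝ => h^2 / (b - l - d0)) (h^2 / (b - l - d0)^2) l := by
      have h1 := (hasDerivAt_const l (h^2)).div hdennl n3
      refine h1.congr_deriv ?_
      field_simp
      ring
    rw [hΦdef, hΦ1def]
    exact ((((((((((hT1.add hT2).add hT3).add hT4).add hT5).sub hlu).add_const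
      b).sub_const 1).sub_const (Real.log b)).sub_const d0).add hH)
  -- second derivative of Φ on the interval
  have hder2 : ∀ l ∈ Ioo (-δ) δ, HasDerivAt Φ1 (Φ2 l) l := by
    intro l hl
    have hl' : |l| ≤ δ := (abs_lt.mpr ⟨hl.1, hl.2⟩).le
    have hel : |e * l| ≤ δ := by rw [heabs]; exact hl'
    have hbl : 0 < b - l - d0 := hpos4 l hl'
    have hbl' : 0 < b + l - d0 := hpos4' l hl'
    have hbe : 0 < b - e*l - d0 := hpos4 (e*l) hel
    have hbe' : 0 < b + e*l - d0 := hpos4' (e*l) hel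
    have hb2 : 0 < b^2 - l^2 := by
      have h1 : 0 < b - l := by have := hpos4 l hl'; linarith [hd0nonneg]
      have h2 : 0 < b + l := by have := hpos4' l hl'; linarith [hd0nonneg]
      have heq : b^2 - l^2 = (b - l) * (b + l) := by ring
      rw [heq]; exact mul_pos h1 h2
    have n1 : b - e*l - d0 ≠ 0 := ne_of_gt hbe
    have n2 : b + e*l - d0 ≠ 0 := ne_of_gt hbe'
    have n3 : b - l - d0 ≠ 0 := ne_of_gt hbl
    have n4 : b + l - d0 ≠ 0 := ne_of_gt hbl'
    have hdenm : HasDerivAt (fun l : ℝ => b - e*l - d0) (-e) l := by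
      simpa using (((hasDerivAt_id l).const_mul e).const_sub b).sub_const d0
    have hdenp : HasDerivAt (fun l : ℝ => b + e*l - d0) e l := by
      simpa using (((hasDerivAt_id l).const_mul e).const_add b).sub_const d0
    have hdennl : HasDerivAt (fun l : ℝ => b - l - d0) (-1) l :=
      ((hasDerivAt_id l).const_sub b).sub_const d0
    have hdenpl : HasDerivAt (fun l : ℝ => b + l - d0) 1 l :=
      ((hasDerivAt_id l).const_add b).sub_const d0
    have hU1 : HasDerivAt (fun l : ℝ => l/(b^2 - l^2))
        (1/(b^2 - l^2) + 2*l^2/(b^2 - l^2)^2) l := by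
      have h0 : HasDerivAt (fun l : ℝ => b^2 - l^2) (-(2*l)) l := by
        simpa using (hasDerivAt_pow 2 l).const_sub (b^2)
      have h1 := (hasDerivAt_id l).div h0 (ne_of_gt hb2)
      refine h1.congr_deriv ?_
      simp only [Pi.pow_apply, id_eq]
      field_simp
      all_goals ring
    have hU2 : HasDerivAt (fun l : ℝ => (1+t)/2 * (Au * e / (b - e*l - d0)^2))
        ((1+t)/2 * (2*Au*(e*e) / (b - e*l - d0)^3)) l := by
      have h1 := ((hasDerivAt_const l (Au*e)).div (hdenm.pow 2)
        (pow_ne_zero 2 n1)).const_mul ((1+t)/2 : ℝ)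
      refine h1.congr_deriv ?_
      simp only [Pi.pow_apply, id_eq]
      field_simp
      all_goals ring
    have hU3 : HasDerivAt (fun l : ℝ => -((1-t)/2 * (Au * e / (b + e*l - d0)^2)))
        ((1-t)/2 * (2*Au*(e*e) / (b + e*l - d0)^3)) l := by
      have h1 := (((hasDerivAt_const l (Au*e)).div (hdenp.pow 2)
        (pow_ne_zero 2 n2)).const_mul ((1-t)/2 : ℝ)).neg
      refine h1.congr_deriv ?_
      simp only [Pi.pow_apply, id_eq]
      field_simp
      all_goals ring
    have hU4 : HasDerivAt (fun l : ℝ => (1/2) * (G 2 l - Au / (b - l - d0)^2))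
        ((1/2) * (2*G 3 l - 2*Au / (b - l - d0)^3)) l := by
      have hG2 : HasDerivAt (G 2) ((2:ℝ) * G 3 l) l := by
        have := hGder 1 l hl
        norm_num at this
        exact this
      have h1 := (hG2.sub ((hasDerivAt_const l Au).div (hdennl.pow 2)
        (pow_ne_zero 2 n3))).const_mul (1/2 : ℝ)
      refine h1.congr_deriv ?_
      simp only [Pi.pow_apply, id_eq]
      field_simp
      all_goals ring
    have hU5 : HasDerivAt (fun l : ℝ => (1/2) * (-(G 2 (-l)) + Au / (b + l - d0)^2))
        ((1/2) * (2*G 3 (-l) - 2*Au / (b + l - d0)^3)) l := by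
      have hneg : -l ∈ Ioo (-δ) δ := ⟨by linarith [hl.2], by linarith [hl.1]⟩
      have hnegD : HasDerivAt (fun y : ℝ => -y) (-1 : ℝ) l := by
        simpa using (hasDerivAt_neg l)
      have hG2n : HasDerivAt (fun y : ℝ => G 2 (-y)) (((2:ℝ) * G 3 (-l)) * (-1)) l := by
        have h0 : HasDerivAt (G 2) ((2:ℝ) * G 3 (-l)) (-l) := by
          have := hGder 1 (-l) hneg
          norm_num at this
          exact this
        exact h0.comp l hnegD
      have h1 := (hG2n.neg.add ((hasDerivAt_const l Au).div (hdenpl.pow 2)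
        (pow_ne_zero 2 n4))).const_mul (1/2 : ℝ)
      refine h1.congr_deriv ?_
      simp only [Pi.pow_apply, id_eq]
      field_simp
      all_goals ring
    have hUH : HasDerivAt (fun l : ℝ => h^2 / (b - l - d0)^2)
        (2*h^2 / (b - l - d0)^3) l := by
      have h1 := (hasDerivAt_const l (h^2)).div (hdennl.pow 2) (pow_ne_zero 2 n3)
      refine h1.congr_deriv ?_
      simp only [Pi.pow_apply, id_eq]
      field_simp
      all_goals ring
    rw [hΦ1def, hΦ2def]
    exact (((((hU1.add hU2).add hU3).add hU4).add hU5).sub_const u).add hUH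
  -- transfer derivatives to GuerraP
  have hderivG : ∀ l ∈ Ioo (-δ) δ, deriv (fun l => GuerraP ξ x t h b u l) l = Φ1 l := by
    intro l hl
    have hevl : (fun l => GuerraP ξ x t h b u l) =ᶠ[nhds l] Φ := by
      filter_upwards [isOpen_Ioo.mem_nhds hl] with y hy using hEq y hy
    rw [Filter.EventuallyEq.deriv_eq hevl]
    exact (hder1 l hl).deriv
  have hevP : (fun l => GuerraP ξ x t h b u l) =ᶠ[nhds lam₀] Φ := by
    filter_upwards [isOpen_Ioo.mem_nhds hlam₀] with y hy using hEq y hy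
  have hevD : deriv (fun l => GuerraP ξ x t h b u l) =ᶠ[nhds lam₀] Φ1 := by
    filter_upwards [isOpen_Ioo.mem_nhds hlam₀] with y hy using hderivG y hy
  have hdiff1 : DifferentiableAt ℝ (fun l => GuerraP ξ x t h b u l) lam₀ :=
    ((hder1 lam₀ hlam₀).congr_of_eventuallyEq hevP).differentiableAt
  have hdiff2 : DifferentiableAt ℝ (deriv (fun l => GuerraP ξ x t h b u l)) lam₀ :=
    ((hder2 lam₀ hlam₀).congr_of_eventuallyEq hevD).differentiableAt
  refine ⟨hdiff1, hdiff2, ?_⟩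
  have hval : deriv (deriv (fun l => GuerraP ξ x t h b u l)) lam₀ = Φ2 lam₀ := by
    rw [Filter.EventuallyEq.deriv_eq hevD]
    exact (hder2 lam₀ hlam₀).deriv
  rw [hval]
  -- the uniform bound on Φ2
  have hl' : |lam₀| ≤ δ := (abs_lt.mpr ⟨hlam₀.1, hlam₀.2⟩).le
  have hel : |e * lam₀| ≤ δ := by rw [heabs]; exact hl'
  have hbl : 0 < b - lam₀ - d0 := hpos4 lam₀ hl'
  have hbl' : 0 < b + lam₀ - d0 := hpos4' lam₀ hl'
  have hbe : 0 < b - e*lam₀ - d0 := hpos4 (e*lam₀) hel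
  have hbe' : 0 < b + e*lam₀ - d0 := hpos4' (e*lam₀) hel
  have hdbl : δ ≤ b - lam₀ - d0 := hden0 lam₀ hl'
  have hdbl' : δ ≤ b + lam₀ - d0 := by
    have := hden0 (-lam₀) (by rwa [abs_neg]); linarith
  have hdbe : δ ≤ b - e*lam₀ - d0 := hden0 (e*lam₀) hel
  have hdbe' : δ ≤ b + e*lam₀ - d0 := by
    have := hden0 (-(e*lam₀)) (by rwa [abs_neg, heabs]); linarith
  have hq1 : δ ≤ b - lam₀ := by linarith [hd0nonneg]
  have hq2 : δ ≤ b + lam₀ := by linarith [hd0nonneg]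
  have hδ2 : δ^2 ≤ b^2 - lam₀^2 := by
    have hmul : δ*δ ≤ (b - lam₀) * (b + lam₀) :=
      mul_le_mul hq1 hq2 hδpos.le (by linarith)
    have heq : (b - lam₀) * (b + lam₀) = b^2 - lam₀^2 := by ring
    have hsq : δ^2 = δ*δ := sq δ
    linarith
  have hb2 : 0 < b^2 - lam₀^2 := lt_of_lt_of_le (by positivity) hδ2
  have ha1 : (0:ℝ) ≤ 1/(b^2 - lam₀^2) := by positivity
  have ha1' : 1/(b^2 - lam₀^2) ≤ 1/δ^2 :=
    one_div_le_one_div_of_le (by positivity) hδ2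
  have ha2 : (0:ℝ) ≤ 2*lam₀^2/(b^2 - lam₀^2)^2 := by positivity
  have ha2' : 2*lam₀^2/(b^2 - lam₀^2)^2 ≤ 2/δ^2 := by
    have h1 : 2*lam₀^2/(b^2 - lam₀^2)^2 ≤ 2*δ^2/(δ^2)^2 := by
      have hlam2 : lam₀^2 ≤ δ^2 := sq_le_sq' (by linarith [(abs_le.mp hl').1]) (abs_le.mp hl').2
      exact div_le_div₀ (by positivity) (by linarith) (by positivity)
        (pow_le_pow_left₀ (by positivity) hδ2 2)
    have h2 : 2*δ^2/(δ^2)^2 = 2/δ^2 := by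
      field_simp
      all_goals ring
    linarith
  have hbound3 : ∀ c : ℝ, 0 < c → δ ≤ c → 2*Au/c^3 ≤ 2*A1/δ^3 := by
    intro c hc hδc
    exact div_le_div₀ (by linarith) (by linarith) (by positivity)
      (pow_le_pow_left₀ hδpos.le hδc 3)
  have hbAu : ∀ c : ℝ, 0 < c → δ ≤ c → Au/c^3 ≤ A1/δ^3 := by
    intro c hc hδc
    exact div_le_div₀ (by linarith) (by linarith) (by positivity)
      (pow_le_pow_left₀ hδpos.le hδc 3)
  have ht1 : t < 1 := ht.2
  have ht0 : 0 < t := ht.1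
  have ha3 : 0 ≤ (1+t)/2 * (2*Au*(e*e)/(b - e*lam₀ - d0)^3) := by
    rw [hee, mul_one]
    have : 0 ≤ 2*Au/(b - e*lam₀ - d0)^3 := div_nonneg (by linarith) (by positivity)
    exact mul_nonneg (by linarith) this
  have ha3' : (1+t)/2 * (2*Au*(e*e)/(b - e*lam₀ - d0)^3) ≤ 2*A1/δ^3 := by
    rw [hee, mul_one]
    have hX : 0 ≤ 2*Au/(b - e*lam₀ - d0)^3 := div_nonneg (by linarith) (by positivity)
    calc (1+t)/2 * (2*Au/(b - e*lam₀ - d0)^3) ≤ 1 * (2*Au/(b - e*lam₀ - d0)^3) :=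
          mul_le_mul_of_nonneg_right (by linarith) hX
      _ = 2*Au/(b - e*lam₀ - d0)^3 := one_mul _
      _ ≤ 2*A1/δ^3 := hbound3 _ hbe hdbe
  have ha4 : 0 ≤ (1-t)/2 * (2*Au*(e*e)/(b + e*lam₀ - d0)^3) := by
    rw [hee, mul_one]
    have : 0 ≤ 2*Au/(b + e*lam₀ - d0)^3 := div_nonneg (by linarith) (by positivity)
    exact mul_nonneg (by linarith) this
  have ha4' : (1-t)/2 * (2*Au*(e*e)/(b + e*lam₀ - d0)^3) ≤ 2*A1/δ^3 := by
    rw [hee, mul_one]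
    have hX : 0 ≤ 2*Au/(b + e*lam₀ - d0)^3 := div_nonneg (by linarith) (by positivity)
    calc (1-t)/2 * (2*Au/(b + e*lam₀ - d0)^3) ≤ 1 * (2*Au/(b + e*lam₀ - d0)^3) :=
          mul_le_mul_of_nonneg_right (by linarith) hX
      _ = 2*Au/(b + e*lam₀ - d0)^3 := one_mul _
      _ ≤ 2*A1/δ^3 := hbound3 _ hbe' hdbe'
  have hG3a := abs_le.mp (hG3bound lam₀ hl')
  have hG3b := abs_le.mp (hG3bound (-lam₀) (by rwa [abs_neg]))
  have hAu1 : 0 ≤ Au/(b - lam₀ - d0)^3 := div_nonneg hAu0 (by positivity)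
  have hAu1' : Au/(b - lam₀ - d0)^3 ≤ A1/δ^3 := hbAu _ hbl hdbl
  have hAu2 : 0 ≤ Au/(b + lam₀ - d0)^3 := div_nonneg hAu0 (by positivity)
  have hAu2' : Au/(b + lam₀ - d0)^3 ≤ A1/δ^3 := hbAu _ hbl' hdbl'
  have ha5 : |(1/2) * (2*G 3 lam₀ - 2*Au/(b - lam₀ - d0)^3)| ≤ A1/δ^3 + A1/δ^3 := by
    rw [mul_div_assoc, abs_le]
    constructor <;> [linarith [hG3a.1, hAu1, hAu1']; linarith [hG3a.2, hAu1, hAu1']]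
  have ha6 : |(1/2) * (2*G 3 (-lam₀) - 2*Au/(b + lam₀ - d0)^3)| ≤ A1/δ^3 + A1/δ^3 := by
    rw [mul_div_assoc, abs_le]
    constructor <;> [linarith [hG3b.1, hAu2, hAu2']; linarith [hG3b.2, hAu2, hAu2']]
  have ha7 : 0 ≤ 2*h^2/(b - lam₀ - d0)^3 := by positivity
  have ha7' : 2*h^2/(b - lam₀ - d0)^3 ≤ 2*h^2/δ^3 :=
    div_le_div₀ (by positivity) (le_refl _) (by positivity)
      (pow_le_pow_left₀ hδpos.le hdbl 3)
  have hexp : Φ2 lam₀ = (1/(b^2 - lam₀^2) + 2*lam₀^2/(b^2 - lam₀^2)^2)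
      + (1+t)/2 * (2*Au*(e*e) / (b - e*lam₀ - d0)^3)
      + (1-t)/2 * (2*Au*(e*e) / (b + e*lam₀ - d0)^3)
      + (1/2) * (2*G 3 lam₀ - 2*Au / (b - lam₀ - d0)^3)
      + (1/2) * (2*G 3 (-lam₀) - 2*Au / (b + lam₀ - d0)^3)
      + 2*h^2 / (b - lam₀ - d0)^3 := by
    rw [hΦ2def]
  rw [hexp]
  have h5 := abs_le.mp ha5
  have h6 := abs_le.mp ha6
  rw [abs_le]
  constructor
  · linarith [ha1, ha2, ha3, ha4, h5.1, h6.1, ha7,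
      div_nonneg hA1 (le_of_lt (pow_pos hδpos 3)),
      le_of_lt (one_div_pos.mpr (pow_pos hδpos 2)),
      le_of_lt (div_pos (by norm_num : (0:ℝ) < 2) (pow_pos hδpos 2))]
  · linarith [ha1', ha2', ha3', ha4', h5.2, h6.2, ha7']
end

section
/- For every b > 0, every λ ∈ ℝ with |λ| < b, and all x¹, x² ∈ ℝ, one has ∫∫ exp(x¹σ¹ + x²σ² + λσ¹σ²) dν^b(σ¹) dν^b(σ²) = √(b²/(b² − λ²)) · exp( (x¹ + x²)²/(4(b − λ)) + (x¹ − x²)²/(4(b + λ)) ), where ν^b is the centered Gaussian measure on ℝ with variance 1/b. (This is the rotation/change-of-variables identity at the heart of Lemma 2.2.) -/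
open MeasureTheory ProbabilityTheory Real
open scoped NNReal ENNReal

lemma integral_rexp_quadratic_aux {a : ℝ} (ha : a < 0) (c : ℝ) :
    ∫ x : ℝ, Real.exp (a * x ^ 2 + c * x)
      = Real.sqrt (π / (-a)) * Real.exp (c ^ 2 / (4 * (-a))) := by
  have h := integral_cexp_quadratic (b := (a : ℂ)) (by simpa using ha) (c : ℂ) 0
  have hpt : ∀ x : ℝ, ((Real.exp (a * x ^ 2 + c * x) : ℝ) : ℂ)
      = Complex.exp ((a : ℂ) * (x : ℂ) ^ 2 + (c : ℂ) * (x : ℂ) + 0) := by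
    intro x
    rw [Complex.ofReal_exp]
    congr 1
    push_cast
    ring
  have key : ((∫ x : ℝ, Real.exp (a * x ^ 2 + c * x) : ℝ) : ℂ)
      = ((Real.sqrt (π / (-a)) * Real.exp (c ^ 2 / (4 * (-a))) : ℝ) : ℂ) := by
    calc ((∫ x : ℝ, Real.exp (a * x ^ 2 + c * x) : ℝ) : ℂ)
        = ∫ x : ℝ, ((Real.exp (a * x ^ 2 + c * x) : ℝ) : ℂ) := (integral_ofReal).symm
      _ = ∫ x : ℝ, Complex.exp ((a : ℂ) * (x : ℂ) ^ 2 + (c : ℂ) * (x : ℂ) + 0) := by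
          exact integral_congr_ae (Filter.Eventually.of_forall hpt)
      _ = ((π : ℂ) / -(a : ℂ)) ^ (1 / 2 : ℂ)
            * Complex.exp (0 - (c : ℂ) ^ 2 / (4 * (a : ℂ))) := h
      _ = ((Real.sqrt (π / (-a)) * Real.exp (c ^ 2 / (4 * (-a))) : ℝ) : ℂ) := by
          have h1 : ((π : ℂ) / -(a : ℂ)) = ((π / (-a) : ℝ) : ℂ) := by push_cast; ring
          have h2 : ((π / (-a) : ℝ) : ℂ) ^ (1 / 2 : ℂ) = ((Real.sqrt (π / (-a)) : ℝ) : ℂ) := by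
            rw [Real.sqrt_eq_rpow,
              Complex.ofReal_cpow (div_nonneg Real.pi_pos.le (by linarith)) (1/2 : ℝ)]
            norm_num
          have h3 : (0 - (c : ℂ) ^ 2 / (4 * (a : ℂ))) = ((c ^ 2 / (4 * (-a)) : ℝ) : ℂ) := by
            push_cast
            ring
          rw [h1, h2, h3, ← Complex.ofReal_exp, ← Complex.ofReal_mul]
  exact_mod_cast key

lemma gauss_quad (b β c : ℝ) (hb : 0 < b) (hβ : 2 * β < b) :
    ∫ x, Real.exp (β * x ^ 2 + c * x) ∂(gaussianReal 0 (Real.toNNReal b⁻¹))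
      = Real.sqrt (b / (b - 2 * β)) * Real.exp (c ^ 2 / (2 * (b - 2 * β))) := by
  have hv : (Real.toNNReal b⁻¹) ≠ 0 := by
    simp [Real.toNNReal_eq_zero, not_le, inv_pos, hb]
  have hvb : ((Real.toNNReal b⁻¹ : ℝ≥0) : ℝ) = b⁻¹ := Real.coe_toNNReal _ (by positivity)
  rw [gaussianReal_of_var_ne_zero _ hv]
  have hd : gaussianPDF 0 (Real.toNNReal b⁻¹)
      = fun x => ((Real.toNNReal (gaussianPDFReal 0 (Real.toNNReal b⁻¹) x) : ℝ≥0) : ℝ≥0∞) :=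
    rfl
  rw [hd, integral_withDensity_eq_integral_smul
    ((measurable_gaussianPDFReal _ _).real_toNNReal) _]
  have hpdf : ∀ x : ℝ, (Real.toNNReal (gaussianPDFReal 0 (Real.toNNReal b⁻¹) x) : ℝ≥0)
        • Real.exp (β * x ^ 2 + c * x)
      = (Real.sqrt (2 * π * b⁻¹))⁻¹ * Real.exp ((β - b / 2) * x ^ 2 + c * x) := by
    intro x
    rw [NNReal.smul_def, smul_eq_mul, Real.coe_toNNReal _ (gaussianPDFReal_nonneg _ _ _)]
    rw [gaussianPDFReal, hvb]
    rw [mul_assoc, ← Real.exp_add]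
    congr 2
    field_simp
    ring
  simp_rw [hpdf]
  rw [integral_const_mul, integral_rexp_quadratic_aux (show β - b / 2 < 0 by linarith) c]
  have h4 : 4 * -(β - b / 2) = 2 * (b - 2 * β) := by ring
  rw [h4, ← mul_assoc]
  congr 1
  rw [← Real.sqrt_inv, ← Real.sqrt_mul (by positivity)]
  congr 1
  have hne : b - 2 * β ≠ 0 := by linarith
  have hpi : π ≠ 0 := Real.pi_ne_zero
  have h5 : -(β - b / 2) = (b - 2 * β) / 2 := by ring
  rw [h5, div_div_eq_mul_div, eq_div_iff hne, mul_inv, inv_inv]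
  field_simp

/-- Rotation identity for the coupled Gaussian integral (heart of Lemma 2.2):
`∫∫ exp(x¹σ¹ + x²σ² + λσ¹σ²) dν^b(σ¹) dν^b(σ²)
  = √(b²/(b² - λ²)) · exp((x¹+x²)²/(4(b-λ)) + (x¹-x²)²/(4(b+λ)))`,
where `ν^b` is the centered Gaussian measure of variance `1/b`. -/
theorem coupled_gaussian_integral (b lam x1 x2 : ℝ) (hb : 0 < b) (hlam : |lam| < b) :
    (∫ σ1, ∫ σ2, Real.exp (x1 * σ1 + x2 * σ2 + lam * σ1 * σ2)
        ∂(gaussianReal 0 (Real.toNNReal b⁻¹)) ∂(gaussianReal 0 (Real.toNNReal b⁻¹)))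
      = Real.sqrt (b ^ 2 / (b ^ 2 - lam ^ 2)) *
        Real.exp ((x1 + x2) ^ 2 / (4 * (b - lam)) + (x1 - x2) ^ 2 / (4 * (b + lam))) := by
  obtain ⟨hl1, hl2⟩ := abs_lt.mp hlam
  have hbl : 0 < b - lam := by linarith
  have hbl2 : 0 < b + lam := by linarith
  have hb2 : 0 < b ^ 2 - lam ^ 2 := by nlinarith
  have hinner : ∀ σ1 : ℝ,
      (∫ σ2, Real.exp (x1 * σ1 + x2 * σ2 + lam * σ1 * σ2)
          ∂(gaussianReal 0 (Real.toNNReal b⁻¹)))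
      = Real.exp (x2 ^ 2 / (2 * b)) *
          Real.exp ((lam ^ 2 / (2 * b)) * σ1 ^ 2 + (x1 + lam * x2 / b) * σ1) := by
    intro σ1
    have hpt : ∀ σ2 : ℝ, Real.exp (x1 * σ1 + x2 * σ2 + lam * σ1 * σ2)
        = Real.exp (x1 * σ1) * Real.exp (0 * σ2 ^ 2 + (x2 + lam * σ1) * σ2) := by
      intro σ2; rw [← Real.exp_add]; congr 1; ring
    simp_rw [hpt]
    rw [integral_const_mul, gauss_quad b 0 (x2 + lam * σ1) hb (by linarith)]
    rw [show b - 2 * 0 = b by ring, div_self hb.ne', Real.sqrt_one, one_mul,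
      ← Real.exp_add, ← Real.exp_add]
    congr 1
    field_simp
    ring
  simp_rw [hinner]
  have hcond : 2 * (lam ^ 2 / (2 * b)) < b := by
    rw [show 2 * (lam ^ 2 / (2 * b)) = lam ^ 2 / b by ring, div_lt_iff₀ hb]
    nlinarith
  rw [integral_const_mul, gauss_quad b (lam ^ 2 / (2 * b)) (x1 + lam * x2 / b) hb hcond]
  have hden : b - 2 * (lam ^ 2 / (2 * b)) = (b ^ 2 - lam ^ 2) / b := by
    field_simp
  have hs : b / (b - 2 * (lam ^ 2 / (2 * b))) = b ^ 2 / (b ^ 2 - lam ^ 2) := by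
    rw [hden, div_div_eq_mul_div, ← sq]
  have he : x2 ^ 2 / (2 * b) + (x1 + lam * x2 / b) ^ 2 / (2 * (b - 2 * (lam ^ 2 / (2 * b))))
      = (x1 + x2) ^ 2 / (4 * (b - lam)) + (x1 - x2) ^ 2 / (4 * (b + lam)) := by
    rw [hden]
    field_simp
    ring
  rw [mul_left_comm, ← Real.exp_add, he, hs]
end

section
/- Let m ∈ ℕ, let v_0, …, v_m ≥ 0 and n_0, …, n_m > 0 be real numbers, and let c ∈ ℝ satisfy c > Σ_{ℓ=0}^m n_ℓ v_ℓ. Set d_p = Σ_{ℓ=p}^m n_ℓ v_ℓ for 0 ≤ p ≤ m and d_{m+1} = 0. Define J_{m+1}(y) = y²/(2c) and, recursively for p = m down to 0, J_p(y) = (1/n_p) log ∫_ℝ exp( n_p J_{p+1}(y + √(v_p) z) ) dγ(z), where γ is the standard Gaussian measure on ℝ. Then all these Gaussian integrals are finite, and for every y ∈ ℝ, J_0(y) = y²/(2(c − d_0)) + ½ Σ_{p=0}^m (1/n_p) log( (c − d_{p+1})/(c − d_p) ). (This closed form for the iterated Gaussian recursion is the computation behind equations (2.10)–(2.11) in the proof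 of Proposition 2.1.) -/
open MeasureTheory ProbabilityTheory Real Finset
open scoped NNReal ENNReal

lemma gauss_aux (a s y : ℝ) (ha : 0 ≤ a) (hb : 2 * a * s ^ 2 < 1) :
    Integrable (fun z => Real.exp (a * (y + s * z) ^ 2)) (gaussianReal 0 1) ∧
    ∫ z, Real.exp (a * (y + s * z) ^ 2) ∂(gaussianReal 0 1)
      = Real.exp (a * y ^ 2 / (1 - 2 * a * s ^ 2)) / Real.sqrt (1 - 2 * a * s ^ 2) := by
  have hB : (0:ℝ) < 1 - 2 * a * s ^ 2 := by linarith
  set B : ℝ := 1 - 2 * a * s ^ 2 with hBdef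
  set μ₀ : ℝ := 2 * a * s * y / B with hμdef
  -- pointwise identity
  have hpt : ∀ z : ℝ, Real.exp (a * (y + s * z) ^ 2) * gaussianPDFReal 0 1 z
      = (Real.exp (a * y ^ 2 / B) / Real.sqrt (2 * π)) * Real.exp (-(B / 2) * (z - μ₀) ^ 2) := by
    intro z
    have h1 : gaussianPDFReal 0 1 z = (Real.sqrt (2 * π))⁻¹ * Real.exp (-z ^ 2 / 2) := by
      simp [gaussianPDFReal]
    have hE : a * (y + s * z) ^ 2 + -z ^ 2 / 2 = a * y ^ 2 / B + -(B / 2) * (z - μ₀) ^ 2 := by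
      rw [hμdef]
      field_simp [hB.ne']
      rw [hBdef]
      ring
    rw [h1,
      show Real.exp (a * (y + s * z) ^ 2) * ((Real.sqrt (2 * π))⁻¹ * Real.exp (-z ^ 2 / 2))
        = (Real.sqrt (2 * π))⁻¹ * Real.exp (a * (y + s * z) ^ 2 + -z ^ 2 / 2) from by
        rw [Real.exp_add]; ring,
      hE,
      show Real.exp (a * y ^ 2 / B) / Real.sqrt (2 * π) * Real.exp (-(B / 2) * (z - μ₀) ^ 2)
        = (Real.sqrt (2 * π))⁻¹ * Real.exp (a * y ^ 2 / B + -(B / 2) * (z - μ₀) ^ 2) from by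
        rw [Real.exp_add]; ring]
  -- integrability of the shifted Gaussian on volume
  have hint : Integrable (fun z : ℝ => Real.exp (-(B / 2) * (z - μ₀) ^ 2)) volume :=
    (integrable_exp_neg_mul_sq (by positivity : (0:ℝ) < B / 2)).comp_sub_right μ₀
  have hmeas : gaussianPDF 0 1 = fun x => (((gaussianPDFReal 0 1 x).toNNReal : ℝ≥0) : ℝ≥0∞) := rfl
  constructor
  · rw [gaussianReal_of_var_ne_zero 0 one_ne_zero,
      integrable_withDensity_iff (measurable_gaussianPDF 0 1)
        (Filter.Eventually.of_forall fun x => ENNReal.ofReal_lt_top)]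
    have : (fun z : ℝ => Real.exp (a * (y + s * z) ^ 2) * (gaussianPDF 0 1 z).toReal)
        = fun z => (Real.exp (a * y ^ 2 / B) / Real.sqrt (2 * π)) *
            Real.exp (-(B / 2) * (z - μ₀) ^ 2) := by
      funext z
      rw [← hpt z]
      congr 1
      rw [gaussianPDF, ENNReal.toReal_ofReal (gaussianPDFReal_nonneg 0 1 z)]
    rw [this]
    exact hint.const_mul _
  · rw [gaussianReal_of_var_ne_zero 0 one_ne_zero, hmeas,
      integral_withDensity_eq_integral_smul (measurable_gaussianPDFReal 0 1).real_toNNReal]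
    have : (fun z : ℝ => ((gaussianPDFReal 0 1 z).toNNReal : ℝ≥0) • Real.exp (a * (y + s * z) ^ 2))
        = fun z => (Real.exp (a * y ^ 2 / B) / Real.sqrt (2 * π)) *
            Real.exp (-(B / 2) * (z - μ₀) ^ 2) := by
      funext z
      rw [NNReal.smul_def, Real.coe_toNNReal _ (gaussianPDFReal_nonneg 0 1 z), smul_eq_mul,
        mul_comm (gaussianPDFReal 0 1 z), hpt z]
    rw [this, integral_const_mul]
    have hshift : ∫ z : ℝ, Real.exp (-(B / 2) * (z - μ₀) ^ 2)
        = ∫ z : ℝ, Real.exp (-(B / 2) * z ^ 2) :=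
      integral_sub_right_eq_self (μ := volume) (fun z => Real.exp (-(B / 2) * z ^ 2)) μ₀
    rw [hshift, integral_gaussian]
    rw [div_div_eq_mul_div, mul_comm π 2, Real.sqrt_div (by positivity : (0:ℝ) ≤ 2 * π) B]
    have h2π : Real.sqrt (2 * π) ≠ 0 := by positivity
    field_simp

/-- Closed form for the iterated Gaussian recursion behind (2.10)-(2.11) in the
proof of Proposition 2.1: with `J_{m+1}(y) = y²/(2c)` and
`J_p(y) = (1/n_p) log ∫ exp(n_p J_{p+1}(y + √(v_p) z)) dγ(z)`, all the Gaussian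
integrals are finite and
`J_0(y) = y²/(2(c - d_0)) + ½ Σ_{p=0}^m (1/n_p) log((c - d_{p+1})/(c - d_p))`,
where `d_p = Σ_{ℓ=p}^m n_ℓ v_ℓ`. -/
theorem iterated_gaussian_recursion (m : ℕ) (v n : ℕ → ℝ) (c : ℝ) (J : ℕ → ℝ → ℝ)
    (hv : ∀ ℓ ≤ m, 0 ≤ v ℓ) (hn : ∀ ℓ ≤ m, 0 < n ℓ)
    (hc : ∑ ℓ ∈ Finset.range (m + 1), n ℓ * v ℓ < c)
    (hJtop : ∀ y, J (m + 1) y = y ^ 2 / (2 * c))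
    (hJrec : ∀ p ≤ m, ∀ y : ℝ, J p y =
      (1 / n p) * Real.log (∫ z, Real.exp (n p * J (p + 1) (y + Real.sqrt (v p) * z))
        ∂(gaussianReal 0 1))) :
    (∀ p ≤ m, ∀ y : ℝ,
      Integrable (fun z => Real.exp (n p * J (p + 1) (y + Real.sqrt (v p) * z)))
        (gaussianReal 0 1)) ∧
    (∀ y : ℝ, J 0 y =
      y ^ 2 / (2 * (c - ∑ ℓ ∈ Finset.Icc 0 m, n ℓ * v ℓ)) +
      (1 / 2) * ∑ p ∈ Finset.range (m + 1), (1 / n p) *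
        Real.log ((c - ∑ ℓ ∈ Finset.Icc (p + 1) m, n ℓ * v ℓ) /
          (c - ∑ ℓ ∈ Finset.Icc p m, n ℓ * v ℓ))) := by
  set d : ℕ → ℝ := fun p => ∑ ℓ ∈ Finset.Icc p m, n ℓ * v ℓ with hd
  have hIcc0 : Finset.Icc 0 m = Finset.range (m + 1) := by
    ext x; simp [Nat.lt_succ_iff]
  have hd0c : d 0 < c := by
    simp only [hd, hIcc0]; exact hc
  have hdle : ∀ p, d p ≤ d 0 := by
    intro p
    simp only [hd]
    refine Finset.sum_le_sum_of_subset_of_nonneg (Finset.Icc_subset_Icc_left (Nat.zero_le p)) ?_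
    intro ℓ hℓ _
    exact mul_nonneg (hn ℓ (Finset.mem_Icc.mp hℓ).2).le (hv ℓ (Finset.mem_Icc.mp hℓ).2)
  have hcd : ∀ p, 0 < c - d p := fun p => by have := hdle p; linarith
  have hdm : d (m + 1) = 0 := by
    simp only [hd]
    rw [Finset.Icc_eq_empty (by omega)]
    simp
  have hdrec : ∀ p ≤ m, d p = n p * v p + d (p + 1) := by
    intro p hp
    have hins : Finset.Icc p m = insert p (Finset.Icc (p + 1) m) := by
      ext x; simp only [Finset.mem_Icc, Finset.mem_insert]; omega
    simp only [hd]
    rw [hins, Finset.sum_insert (by simp only [Finset.mem_Icc]; omega)]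
  set e : ℕ → ℝ := fun q => (1 / n q) * Real.log ((c - d (q + 1)) / (c - d q)) with hedef
  -- the one-step computation
  have step : ∀ p ≤ m,
      (∀ y : ℝ, J (p + 1) y = y ^ 2 / (2 * (c - d (p + 1))) +
        (1 / 2) * ∑ q ∈ Finset.Icc (p + 1) m, e q) →
      (∀ y : ℝ, Integrable (fun z => Real.exp (n p * J (p + 1) (y + Real.sqrt (v p) * z)))
        (gaussianReal 0 1)) ∧
      (∀ y : ℝ, J p y = y ^ 2 / (2 * (c - d p)) +
        (1 / 2) * ∑ q ∈ Finset.Icc p m, e q) := by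
    intro p hp hJ1
    have hnp := hn p hp
    have hvp := hv p hp
    have hc1 : 0 < c - d (p + 1) := hcd (p + 1)
    have hc0 : 0 < c - d p := hcd p
    set K : ℝ := (1 / 2) * ∑ q ∈ Finset.Icc (p + 1) m, e q with hKdef
    set a : ℝ := n p / (2 * (c - d (p + 1))) with hadef
    have ha : 0 ≤ a := le_of_lt (div_pos hnp (by linarith))
    have hs2 : Real.sqrt (v p) ^ 2 = v p := Real.sq_sqrt hvp
    have hB : 1 - 2 * a * Real.sqrt (v p) ^ 2 = (c - d p) / (c - d (p + 1)) := by
      rw [hs2, hadef, hdrec p hp]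
      field_simp
      ring
    have hblt : 2 * a * Real.sqrt (v p) ^ 2 < 1 := by
      have := div_pos hc0 hc1; linarith [hB]
    have hfun : ∀ y z : ℝ, Real.exp (n p * J (p + 1) (y + Real.sqrt (v p) * z))
        = Real.exp (n p * K) * Real.exp (a * (y + Real.sqrt (v p) * z) ^ 2) := by
      intro y z
      rw [hJ1, ← Real.exp_add]
      congr 1
      rw [hadef]
      field_simp
      ring
    constructor
    · intro y
      refine (((gauss_aux a (Real.sqrt (v p)) y ha hblt).1).const_mul
        (Real.exp (n p * K))).congr ?_
      exact Filter.Eventually.of_forall fun z => (hfun y z).symm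
    · intro y
      have hIval : ∫ z, Real.exp (n p * J (p + 1) (y + Real.sqrt (v p) * z)) ∂(gaussianReal 0 1)
          = Real.exp (n p * K) *
            (Real.exp (a * y ^ 2 / ((c - d p) / (c - d (p + 1)))) /
              Real.sqrt ((c - d p) / (c - d (p + 1)))) := by
        simp_rw [hfun y]
        rw [integral_const_mul, (gauss_aux a (Real.sqrt (v p)) y ha hblt).2, hB]
      have hqpos : (0:ℝ) < (c - d p) / (c - d (p + 1)) := div_pos hc0 hc1
      rw [hJrec p hp y, hIval,
        Real.log_mul (Real.exp_ne_zero _)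
          (ne_of_gt (div_pos (Real.exp_pos _) (Real.sqrt_pos.mpr hqpos))),
        Real.log_div (Real.exp_ne_zero _) (ne_of_gt (Real.sqrt_pos.mpr hqpos)),
        Real.log_exp, Real.log_exp, Real.log_sqrt hqpos.le]
      have hins : Finset.Icc p m = insert p (Finset.Icc (p + 1) m) := by
        ext x; simp only [Finset.mem_Icc, Finset.mem_insert]; omega
      rw [hins, Finset.sum_insert (by simp only [Finset.mem_Icc]; omega)]
      have hlog : Real.log ((c - d p) / (c - d (p + 1)))
          = - Real.log ((c - d (p + 1)) / (c - d p)) := by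
        rw [Real.log_div hc0.ne' hc1.ne', Real.log_div hc1.ne' hc0.ne']; ring
      have hay : a * y ^ 2 / ((c - d p) / (c - d (p + 1))) = n p * y ^ 2 / (2 * (c - d p)) := by
        rw [hadef]; field_simp
      rw [hlog, hay]
      simp only [hKdef, hedef]
      field_simp
      ring
  have key : ∀ k, k ≤ m + 1 → ∀ y : ℝ, J (m + 1 - k) y
      = y ^ 2 / (2 * (c - d (m + 1 - k))) + (1 / 2) * ∑ q ∈ Finset.Icc (m + 1 - k) m, e q := by
    intro k
    induction k with
    | zero =>
      intro _ y
      simp only [Nat.sub_zero]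
      rw [hJtop, hdm, Finset.Icc_eq_empty (by omega)]
      simp
    | succ k ih =>
      intro hk y
      have hp : m + 1 - (k + 1) ≤ m := by omega
      have hsucc : m + 1 - k = m + 1 - (k + 1) + 1 := by omega
      have hJ1 : ∀ y : ℝ, J (m + 1 - (k + 1) + 1) y
          = y ^ 2 / (2 * (c - d (m + 1 - (k + 1) + 1))) +
            (1 / 2) * ∑ q ∈ Finset.Icc (m + 1 - (k + 1) + 1) m, e q := by
        intro y'
        rw [← hsucc]
        exact ih (by omega) y'
      exact (step (m + 1 - (k + 1)) hp hJ1).2 y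
  have main : ∀ p, p ≤ m + 1 → ∀ y : ℝ, J p y
      = y ^ 2 / (2 * (c - d p)) + (1 / 2) * ∑ q ∈ Finset.Icc p m, e q := by
    intro p hp y
    have h := key (m + 1 - p) (by omega) y
    rwa [show m + 1 - (m + 1 - p) = p from by omega] at h
  constructor
  · intro p hp y
    exact (step p hp (fun y' => main (p + 1) (by omega) y')).1 y
  · intro y
    have h := main 0 (by omega) y
    rw [← hIcc0]
    simp only [hedef, hd] at h
    exact h
end
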